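/- arXiv:1306.5724 — 3 statements merged into one kernel-verified Lean document; each statement's English description precedes it below -/
import Mathlib

section
/- For every n ≥ 0, the free abelian group of rank n is the group of fractions of a unique Garside monoid up to isomorphism: the monoid (ℕⁿ, +) is a Garside monoid whose group of fractions is (ℤⁿ, +), and every Garside monoid M admitting an injective monoid homomorphism ι : M → ℤⁿ such that every element of ℤⁿ equals −ι(a) + ι(b) for some a, b ∈ M is isomorphic as a monoid to (ℕⁿ, +). -/
/-- `a` left-divides `b`. -/
def LeftDvd {M : Type*} [Monoid M] (a b : M) : Prop := ∃ c, b = a * c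

/-- `a` right-divides `b`. -/
def RightDvd' {M : Type*} [Monoid M] (a b : M) : Prop := ∃ c, b = c * a

/-- `c` is a right lcm of `a` and `b` (least common upper bound for left-divisibility). -/
def IsRightLcm {M : Type*} [Monoid M] (a b c : M) : Prop :=
  LeftDvd a c ∧ LeftDvd b c ∧ ∀ d, LeftDvd a d → LeftDvd b d → LeftDvd c d

/-- `c` is a left lcm of `a` and `b` (least common upper bound for right-divisibility). -/
def IsLeftLcm {M : Type*} [Monoid M] (a b c : M) : Prop :=
  RightDvd' a c ∧ RightDvd' b c ∧ ∀ d, RightDvd' a d → RightDvd' b d → RightDvd' c d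

/-- `Δ` is a Garside element: its left-divisors coincide with its right-divisors,
they form a finite set, and this set generates `M`. -/
def IsGarsideElement {M : Type*} [Monoid M] (Δ : M) : Prop :=
  {d | LeftDvd d Δ} = {d | RightDvd' d Δ} ∧
  {d | LeftDvd d Δ}.Finite ∧
  Submonoid.closure {d | LeftDvd d Δ} = ⊤

/-- A Garside monoid: cancellative, conical, atomic, with right and left lcms,
admitting a Garside element. -/
structure IsGarsideMonoid (M : Type*) [Monoid M] : Prop where
  mul_left_cancel : ∀ a b c : M, a * b = a * c → b = c
  mul_right_cancel : ∀ a b c : M, b * a = c * a → b = c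
  conical : ∀ a : M, IsUnit a → a = 1
  atomic : ∃ ν : M → ℕ, (∀ a : M, a ≠ 1 → 0 < ν a) ∧ ∀ a b : M, ν a + ν b ≤ ν (a * b)
  right_lcm : ∀ a b : M, ∃ c, IsRightLcm a b c
  left_lcm : ∀ a b : M, ∃ c, IsLeftLcm a b c
  garside : ∃ Δ : M, IsGarsideElement Δ

/-- A Garside structure on a group `G`: a Garside monoid together with an embedding
into `G` realizing `G` as its group of (left) fractions. -/
structure GarsideStructure (G : Type u) [Group G] where
  M : Type u
  [instM : Monoid M]
  garside : IsGarsideMonoid M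
  ι : M →* G
  inj : Function.Injective ι
  frac : ∀ g : G, ∃ a b : M, g = (ι a)⁻¹ * ι b

/-- A group is Garside if it is the group of fractions of some Garside monoid. -/
def IsGarsideGroup (G : Type u) [Group G] : Prop := Nonempty (GarsideStructure G)

namespace GarsideAux
variable {n : ℕ}

lemma leftDvd_iff (a b : Multiplicative (Fin n → ℕ)) :
    LeftDvd a b ↔ ∀ i, a.toAdd i ≤ b.toAdd i := by
  constructor
  · rintro ⟨c, rfl⟩ i
    simp [Nat.le_add_right]
  · intro h
    refine ⟨Multiplicative.ofAdd (fun i => b.toAdd i - a.toAdd i), ?_⟩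
    apply Multiplicative.toAdd.injective
    funext i
    simp [Nat.add_sub_cancel' (h i)]

lemma rightDvd_iff (a b : Multiplicative (Fin n → ℕ)) :
    RightDvd' a b ↔ ∀ i, a.toAdd i ≤ b.toAdd i := by
  rw [show RightDvd' a b ↔ LeftDvd a b from ?_, leftDvd_iff]
  constructor <;> rintro ⟨c, rfl⟩ <;> exact ⟨c, mul_comm _ _⟩

lemma nat_garside : IsGarsideMonoid (Multiplicative (Fin n → ℕ)) := by
  constructor
  · exact fun a b c h => mul_left_cancel h
  · exact fun a b c h => mul_right_cancel h
  · rintro a ⟨u, rfl⟩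
    have h : (u : Multiplicative (Fin n → ℕ)) * ↑u⁻¹ = 1 := u.mul_inv
    have h2 : ∀ i, (u : Multiplicative (Fin n → ℕ)).toAdd i + (↑u⁻¹ : Multiplicative (Fin n → ℕ)).toAdd i = 0 := by
      intro i; exact congrFun (congrArg Multiplicative.toAdd h) i
    apply Multiplicative.toAdd.injective
    funext i
    exact (Nat.add_eq_zero.mp (h2 i)).1
  · refine ⟨fun a => ∑ i, a.toAdd i, ?_, ?_⟩
    · intro a ha
      have : a.toAdd ≠ 0 := fun h => ha (Multiplicative.toAdd.injective h)
      have : ∃ i, a.toAdd i ≠ 0 := by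
        by_contra hc
        push_neg at hc
        exact this (funext hc)
      obtain ⟨i, hi⟩ := this
      exact Finset.sum_pos' (fun j _ => Nat.zero_le _) ⟨i, Finset.mem_univ i, Nat.pos_of_ne_zero hi⟩
    · intro a b
      rw [← Finset.sum_add_distrib]
      apply le_of_eq
      exact Finset.sum_congr rfl fun i _ => rfl
  · intro a b
    refine ⟨Multiplicative.ofAdd (fun i => max (a.toAdd i) (b.toAdd i)), ?_, ?_, ?_⟩
    · rw [leftDvd_iff]; exact fun i => le_max_left _ _
    · rw [leftDvd_iff]; exact fun i => le_max_right _ _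
    · intro d hd1 hd2
      rw [leftDvd_iff] at *
      exact fun i => max_le (hd1 i) (hd2 i)
  · intro a b
    refine ⟨Multiplicative.ofAdd (fun i => max (a.toAdd i) (b.toAdd i)), ?_, ?_, ?_⟩
    · rw [rightDvd_iff]; exact fun i => le_max_left _ _
    · rw [rightDvd_iff]; exact fun i => le_max_right _ _
    · intro d hd1 hd2
      rw [rightDvd_iff] at *
      exact fun i => max_le (hd1 i) (hd2 i)
  · refine ⟨Multiplicative.ofAdd (fun _ => 1), ?_, ?_, ?_⟩
    · ext d; simp only [Set.mem_setOf_eq, leftDvd_iff, rightDvd_iff]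
    · apply Set.Finite.subset (Set.Finite.preimage
        (Set.injOn_of_injective Multiplicative.toAdd.injective)
        (Set.Finite.pi (fun _ : Fin n => Set.finite_Iic (1 : ℕ))))
      intro d hd
      rw [Set.mem_setOf_eq, leftDvd_iff] at hd
      exact fun i _ => hd i
    · rw [eq_top_iff]
      intro x _
      have key : x = ∏ i, (Multiplicative.ofAdd (Pi.single i 1) :
          Multiplicative (Fin n → ℕ)) ^ (x.toAdd i) := by
        apply Multiplicative.toAdd.injective
        rw [toAdd_prod]
        conv_lhs => rw [← Finset.univ_sum_single x.toAdd]
        refine Finset.sum_congr rfl fun i _ => ?_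
        rw [toAdd_pow]
        funext j
        simp [Pi.single_apply, mul_comm]
      rw [key]
      apply Submonoid.prod_mem
      intro i _
      apply pow_mem
      apply Submonoid.subset_closure
      rw [Set.mem_setOf_eq, leftDvd_iff]
      intro j
      simp [Pi.single_apply]
      split <;> simp

def natCastHom : Multiplicative (Fin n → ℕ) →* Multiplicative (Fin n → ℤ) :=
  AddMonoidHom.toMultiplicative
    { toFun := fun f i => (f i : ℤ)
      map_zero' := by funext i; simp
      map_add' := by intro f g; funext i; simp }

lemma natCastHom_inj : Function.Injective (natCastHom (n := n)) := by
  intro a b h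
  apply Multiplicative.toAdd.injective
  funext i
  have h2 := congrFun (congrArg Multiplicative.toAdd h) i
  have : ((Multiplicative.toAdd a i : ℕ) : ℤ) = ((Multiplicative.toAdd b i : ℕ) : ℤ) := h2
  exact_mod_cast this

lemma natCastHom_frac (g : Multiplicative (Fin n → ℤ)) :
    ∃ a b : Multiplicative (Fin n → ℕ), g = ((natCastHom a)⁻¹ * natCastHom b) := by
  refine ⟨Multiplicative.ofAdd (fun i => (-(g.toAdd i)).toNat),
    Multiplicative.ofAdd (fun i => (g.toAdd i).toNat), ?_⟩
  apply Multiplicative.toAdd.injective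
  funext i
  show g.toAdd i = -(((-(g.toAdd i)).toNat : ℤ)) + ((g.toAdd i).toNat : ℤ)
  rw [neg_add_eq_sub, Int.toNat_sub_toNat_neg]

end GarsideAux

namespace GarsideAux

section Uniq

variable {M : Type*} [CancelCommMonoid M]

/-- An atom of a monoid. -/
def GAtom (a : M) : Prop := a ≠ 1 ∧ ∀ b c : M, a = b * c → b = 1 ∨ c = 1

lemma leftDvd_iff_dvd {a b : M} : LeftDvd a b ↔ a ∣ b :=
  ⟨fun ⟨c, h⟩ => ⟨c, h⟩, fun ⟨c, h⟩ => ⟨c, h⟩⟩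

variable (hconical : ∀ x : M, IsUnit x → x = 1)

include hconical in
lemma eq_one_of_dvd_one {a : M} (h : a ∣ 1) : a = 1 := by
  obtain ⟨c, hc⟩ := h
  exact hconical a (IsUnit.of_mul_eq_one c hc.symm)

variable (ν : M → ℕ) (hν : ∀ a : M, a ≠ 1 → 0 < ν a)
  (hνm : ∀ a b : M, ν a + ν b ≤ ν (a * b))

include hν hνm in
lemma exists_atom_dvd : ∀ a : M, a ≠ 1 → ∃ p, GAtom p ∧ p ∣ a := by
  suffices h : ∀ N, ∀ a : M, ν a ≤ N → a ≠ 1 → ∃ p, GAtom p ∧ p ∣ a by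
    exact fun a ha => h (ν a) a le_rfl ha
  intro N
  induction N with
  | zero => exact fun a haN ha => absurd haN (by simpa using (hν a ha).ne')
  | succ N ih =>
    intro a haN ha
    by_cases hat : GAtom a
    · exact ⟨a, hat, dvd_refl a⟩
    · have : ∃ b c : M, a = b * c ∧ b ≠ 1 ∧ c ≠ 1 := by
        unfold GAtom at hat
        push_neg at hat
        obtain ⟨b, c, h1, h2, h3⟩ := hat ha
        exact ⟨b, c, h1, h2, h3⟩
      obtain ⟨b, c, rfl, hb, hc⟩ := this
      have hbN : ν b ≤ N := by
        have := hνm b c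
        have := hν c hc
        omega
      obtain ⟨p, hp, hpb⟩ := ih b hbN hb
      exact ⟨p, hp, hpb.mul_right c⟩

variable (hlcm : ∀ a b : M, ∃ c, IsRightLcm a b c)

include hlcm in
lemma atoms_mul_dvd {p q x : M} (hp : GAtom p) (hq : GAtom q) (hpq : p ≠ q)
    (h1 : p ∣ x) (h2 : q ∣ x) : p * q ∣ x := by
  obtain ⟨c, ⟨u, hu⟩, ⟨v, hv⟩, hmin⟩ := hlcm p q
  have hcpq : LeftDvd c (p * q) := hmin (p * q) ⟨q, rfl⟩ ⟨p, mul_comm p q⟩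
  obtain ⟨r, hr⟩ := hcpq
  have hqur : q = u * r := by
    apply mul_left_cancel (a := p)
    rw [← mul_assoc, ← hu, ← hr]
  have hc_eq : c = p * q := by
    rcases hq.2 u r hqur with h | h
    · exfalso
      rw [h, mul_one] at hu
      rw [hu] at hv
      rcases hp.2 q v hv with h' | h'
      · exact hq.1 h'
      · rw [h', mul_one] at hv; exact hpq hv
    · rw [h, mul_one] at hr; exact hr.symm
  have : LeftDvd c x := hmin x (leftDvd_iff_dvd.mpr h1) (leftDvd_iff_dvd.mpr h2)
  rw [← hc_eq]
  exact leftDvd_iff_dvd.mp this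

include hlcm in
lemma atom_strip {p q x : M} (hp : GAtom p) (hq : GAtom q) (hpq : p ≠ q)
    (h : p ∣ q * x) : p ∣ x := by
  have h2 : q ∣ q * x := dvd_mul_right q x
  obtain ⟨t, ht⟩ := atoms_mul_dvd hlcm hp hq hpq h h2
  refine ⟨t, mul_left_cancel (a := q) ?_⟩
  rw [ht, mul_comm p q, mul_assoc]

include hν hνm hlcm in
lemma atom_prime {p : M} (hp : GAtom p) : ∀ a b : M, p ∣ a * b → p ∣ a ∨ p ∣ b := by
  suffices h : ∀ N, ∀ a b : M, ν a ≤ N → p ∣ a * b → p ∣ a ∨ p ∣ b by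
    exact fun a b => h (ν a) a b le_rfl
  intro N
  induction N with
  | zero =>
    intro a b haN hd
    rcases eq_or_ne a 1 with rfl | ha
    · right; rwa [one_mul] at hd
    · exact absurd haN (by simpa using (hν a ha).ne')
  | succ N ih =>
    intro a b haN hd
    rcases eq_or_ne a 1 with rfl | ha
    · right; rwa [one_mul] at hd
    obtain ⟨q, hq, ⟨a', rfl⟩⟩ := exists_atom_dvd ν hν hνm a ha
    rcases eq_or_ne p q with rfl | hpq
    · exact Or.inl (dvd_mul_right p a')
    have hstrip : p ∣ a' * b := by
      apply atom_strip hlcm hp hq hpq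
      rwa [← mul_assoc]
    have ha'N : ν a' ≤ N := by
      have := hνm q a'
      have := hν q hq.1
      omega
    rcases ih a' b ha'N hstrip with h | h
    · exact Or.inl (h.mul_left q)
    · exact Or.inr h

lemma atom_dvd_atom {p q : M} (hp : GAtom p) (hq : GAtom q) (h : p ∣ q) : p = q := by
  obtain ⟨c, hc⟩ := h
  rcases hq.2 p c hc with h' | h'
  · exact absurd h' hp.1
  · rw [h', mul_one] at hc; exact hc.symm

include hconical hν hνm hlcm in
lemma atom_dvd_pow {p q : M} (hp : GAtom p) (hq : GAtom q) {m : ℕ} (h : p ∣ q ^ m) :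
    p = q ∧ 0 < m := by
  induction m with
  | zero =>
    simp only [pow_zero] at h
    exact absurd (eq_one_of_dvd_one hconical h) hp.1
  | succ m ihm =>
    refine ⟨?_, Nat.succ_pos m⟩
    rw [pow_succ, mul_comm] at h
    rcases atom_prime ν hν hνm hlcm hp q (q ^ m) h with h' | h'
    · exact atom_dvd_atom hp hq h'
    · exact (ihm h').1

include hconical hν hνm hlcm in
lemma atom_dvd_prod {p : M} (hp : GAtom p) {k : Type*} [Fintype k] [DecidableEq k]
    (F : k → M) (s : Finset k) (h : p ∣ ∏ i ∈ s, F i) : ∃ i ∈ s, p ∣ F i := by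
  induction s using Finset.induction_on with
  | empty =>
    simp only [Finset.prod_empty] at h
    exact absurd (eq_one_of_dvd_one hconical h) hp.1
  | insert _ _ hx ih =>
    rename_i a s'
    rw [Finset.prod_insert hx] at h
    rcases atom_prime ν hν hνm hlcm hp _ _ h with h' | h'
    · exact ⟨a, Finset.mem_insert_self a s', h'⟩
    · obtain ⟨i, hi, hd⟩ := ih h'
      exact ⟨i, Finset.mem_insert_of_mem hi, hd⟩

lemma prod_pow_single_add {k : ℕ} (F : Fin k → M) (f : Fin k → ℕ) (i0 : Fin k) :
    ∏ i, F i ^ (f i + (Pi.single i0 1 : Fin k → ℕ) i) = F i0 * ∏ i, F i ^ f i := by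
  classical
  have h1 : ∏ i, F i ^ (f i + (Pi.single i0 1 : Fin k → ℕ) i)
      = (∏ i, F i ^ f i) * ∏ i, F i ^ ((Pi.single i0 1 : Fin k → ℕ) i) := by
    rw [← Finset.prod_mul_distrib]
    exact Finset.prod_congr rfl fun i _ => pow_add _ _ _
  have h2 : ∏ i, F i ^ ((Pi.single i0 1 : Fin k → ℕ) i) = F i0 := by
    rw [Finset.prod_eq_single i0]
    · simp
    · intro j _ hj; simp [Pi.single_eq_of_ne hj]
    · simp
  rw [h1, h2, mul_comm]

lemma atom_mem_gen {D : Set M} (hclos : Submonoid.closure D = ⊤)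
    {p : M} (hp : GAtom p) : p ∈ D := by
  have hmem : p ∈ Submonoid.closure D := by rw [hclos]; trivial
  refine Submonoid.closure_induction (motive := fun x _ => GAtom x → x ∈ D)
    (fun x hx _ => hx) (fun h => absurd rfl h.1) ?_ hmem hp
  intro x y hx hy ihx ihy hxy
  rcases hxy.2 x y rfl with h | h
  · rw [h, one_mul] at hxy ⊢; exact ihy hxy
  · rw [h, mul_one] at hxy ⊢; exact ihx hxy

lemma sum_pi_single_one {k : ℕ} (i0 : Fin k) :
    ∑ j, (Pi.single i0 1 : Fin k → ℕ) j = 1 := by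
  classical
  rw [Finset.sum_eq_single i0]
  · simp
  · intro j _ hj; simp [Pi.single_eq_of_ne hj]
  · simp

end Uniq

lemma garside_comm_iso {n : ℕ} {M : Type*} [CancelCommMonoid M]
    (hconical : ∀ x : M, IsUnit x → x = 1)
    (ν : M → ℕ) (hν : ∀ a : M, a ≠ 1 → 0 < ν a) (hνm : ∀ a b : M, ν a + ν b ≤ ν (a * b))
    (hlcm : ∀ a b : M, ∃ c, IsRightLcm a b c)
    (D : Set M) (hDfin : D.Finite) (hclos : Submonoid.closure D = ⊤)
    (ι : M →* Multiplicative (Fin n → ℤ)) (hinj : Function.Injective ι)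
    (hfrac : ∀ g : Multiplicative (Fin n → ℤ), ∃ a b : M, g = (ι a)⁻¹ * ι b) :
    Nonempty (M ≃* Multiplicative (Fin n → ℕ)) := by
  classical
  have hAfin : {p : M | GAtom p}.Finite :=
    hDfin.subset (fun p hp => atom_mem_gen hclos hp)
  set A : Finset M := hAfin.toFinset with hA
  set k := A.card with hk
  set e : Fin k → M := fun i => (A.equivFin.symm i : M) with he_def
  have he : ∀ i, GAtom (e i) := fun i => hAfin.mem_toFinset.mp (A.equivFin.symm i).2
  have heinj : Function.Injective e := fun i j h => by
    have := A.equivFin.symm.injective (Subtype.coe_injective h)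
    exact this
  have hesurj : ∀ p : M, GAtom p → ∃ i, e i = p := by
    intro p hp
    have hpA : p ∈ A := by rw [hA, Set.Finite.mem_toFinset]; exact hp
    exact ⟨A.equivFin ⟨p, hpA⟩, by simp [he_def]⟩
  -- surjectivity of the representation
  have hsurj : ∀ a : M, ∃ f : Fin k → ℕ, a = ∏ i, e i ^ f i := by
    suffices h : ∀ N, ∀ a : M, ν a ≤ N → ∃ f : Fin k → ℕ, a = ∏ i, e i ^ f i by
      exact fun a => h (ν a) a le_rfl
    intro N
    induction N with
    | zero =>
      intro a haN
      rcases eq_or_ne a 1 with rfl | ha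
      · exact ⟨0, by simp⟩
      · exact absurd haN (by simpa using (hν a ha).ne')
    | succ N ih =>
      intro a haN
      rcases eq_or_ne a 1 with rfl | ha
      · exact ⟨0, by simp⟩
      obtain ⟨p, hp, a', rfl⟩ := exists_atom_dvd ν hν hνm a ha
      obtain ⟨i0, hi0⟩ := hesurj p hp
      have ha'N : ν a' ≤ N := by
        have := hνm p a'
        have := hν p hp.1
        omega
      obtain ⟨f, rfl⟩ := ih a' ha'N
      refine ⟨f + Pi.single i0 1, ?_⟩
      have hps := prod_pow_single_add e f i0
      simp only [Pi.add_apply]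
      rw [hps, hi0]
  -- an atom divides a product of atom powers iff exponent positive
  have hdvd_of_pos : ∀ (g : Fin k → ℕ) (i : Fin k), g i ≠ 0 → e i ∣ ∏ j, e j ^ g j := by
    intro g i hgi
    exact (dvd_pow_self (e i) hgi).trans
      ⟨∏ x ∈ Finset.univ.erase i, e x ^ g x,
        (Finset.mul_prod_erase Finset.univ (fun j => e j ^ g j) (Finset.mem_univ i)).symm⟩
  have hpos_of_dvd : ∀ (g : Fin k → ℕ) (i : Fin k), e i ∣ ∏ j, e j ^ g j → g i ≠ 0 := by
    intro g i hd
    obtain ⟨j, _, hdj⟩ := atom_dvd_prod hconical ν hν hνm hlcm (he i)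
      (fun j => e j ^ g j) Finset.univ hd
    obtain ⟨heq, hpos⟩ := atom_dvd_pow hconical ν hν hνm hlcm (he i) (he j) hdj
    have hij : i = j := heinj heq
    rw [hij]
    omega
  -- injectivity of the representation
  have hinjψ : ∀ f g : Fin k → ℕ, (∏ i, e i ^ f i) = ∏ i, e i ^ g i → f = g := by
    suffices h : ∀ N, ∀ f g : Fin k → ℕ, ∑ i, f i ≤ N →
        (∏ i, e i ^ f i) = ∏ i, e i ^ g i → f = g by
      exact fun f g => h (∑ i, f i) f g le_rfl
    intro N
    induction N with
    | zero =>
      intro f g hfN hfg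
      have hf0 : ∀ i, f i = 0 := by
        intro i
        have := Finset.sum_eq_zero_iff.mp (Nat.le_zero.mp hfN) i (Finset.mem_univ i)
        exact this
      have hprod1 : (∏ i, e i ^ f i) = 1 := Finset.prod_eq_one fun i _ => by rw [hf0 i, pow_zero]
      funext i
      rw [hf0 i]
      by_contra hgi
      have hd : e i ∣ ∏ j, e j ^ g j := hdvd_of_pos g i fun h => hgi (by rw [h])
      rw [← hfg, hprod1] at hd
      exact (he i).1 (eq_one_of_dvd_one hconical hd)
    | succ N ih =>
      intro f g hfN hfg
      by_cases hf0 : ∀ i, f i = 0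
      · have hprod1 : (∏ i, e i ^ f i) = 1 := Finset.prod_eq_one fun i _ => by rw [hf0 i, pow_zero]
        funext i
        rw [hf0 i]
        by_contra hgi
        have hd : e i ∣ ∏ j, e j ^ g j := hdvd_of_pos g i fun h => hgi (by rw [h])
        rw [← hfg, hprod1] at hd
        exact (he i).1 (eq_one_of_dvd_one hconical hd)
      push_neg at hf0
      obtain ⟨i0, hfi0⟩ := hf0
      have hgi0 : g i0 ≠ 0 := by
        apply hpos_of_dvd g i0
        rw [← hfg]
        exact hdvd_of_pos f i0 hfi0
      set f' : Fin k → ℕ := fun j => f j - (Pi.single i0 1 : Fin k → ℕ) j with hf'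
      set g' : Fin k → ℕ := fun j => g j - (Pi.single i0 1 : Fin k → ℕ) j with hg'
      have hfdec : ∀ j, f j = f' j + (Pi.single i0 1 : Fin k → ℕ) j := by
        intro j
        rcases eq_or_ne j i0 with rfl | hj
        · simp only [hf', Pi.single_eq_same]
          omega
        · simp [hf', Pi.single_eq_of_ne hj]
      have hgdec : ∀ j, g j = g' j + (Pi.single i0 1 : Fin k → ℕ) j := by
        intro j
        rcases eq_or_ne j i0 with rfl | hj
        · simp only [hg', Pi.single_eq_same]
          omega
        · simp [hg', Pi.single_eq_of_ne hj]
      have hfprod : (∏ i, e i ^ f i) = e i0 * ∏ i, e i ^ f' i := by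
        rw [← prod_pow_single_add e f' i0]
        exact Finset.prod_congr rfl fun i _ => by rw [hfdec i]
      have hgprod : (∏ i, e i ^ g i) = e i0 * ∏ i, e i ^ g' i := by
        rw [← prod_pow_single_add e g' i0]
        exact Finset.prod_congr rfl fun i _ => by rw [hgdec i]
      have hcancel : (∏ i, e i ^ f' i) = ∏ i, e i ^ g' i := by
        apply mul_left_cancel (a := e i0)
        rw [← hfprod, ← hgprod, hfg]
      have hsum : ∑ i, f' i ≤ N := by
        have h1 : ∑ i, f i = (∑ i, f' i) + ∑ j, (Pi.single i0 1 : Fin k → ℕ) j := by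
          rw [← Finset.sum_add_distrib]
          exact Finset.sum_congr rfl fun i _ => hfdec i
        rw [sum_pi_single_one i0] at h1
        omega
      have h := ih f' g' hsum hcancel
      funext j
      rw [hfdec j, hgdec j, h]
  -- the monoid hom from (Fin k → ℕ)
  set Ψ : Multiplicative (Fin k → ℕ) →* M :=
    { toFun := fun f => ∏ i, e i ^ (Multiplicative.toAdd f i)
      map_one' := by simp
      map_mul' := by
        intro a b
        simp only [toAdd_mul, Pi.add_apply]
        rw [← Finset.prod_mul_distrib]
        exact Finset.prod_congr rfl fun i _ => pow_add _ _ _ } with hΨ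
  have hΨbij : Function.Bijective Ψ := by
    constructor
    · intro a b hab
      have hab' : (∏ i, e i ^ (Multiplicative.toAdd a i)) = ∏ i, e i ^ (Multiplicative.toAdd b i) := hab
      have := hinjψ (Multiplicative.toAdd a) (Multiplicative.toAdd b) hab'
      exact Multiplicative.toAdd.injective this
    · intro a
      obtain ⟨f, hf⟩ := hsurj a
      exact ⟨Multiplicative.ofAdd f, hf.symm⟩
  -- linear algebra: k = n up to an equivalence of Fin types
  set v : Fin k → (Fin n → ℤ) := fun i => (ι (e i)).toAdd with hv
  set L : (Fin k → ℤ) →ₗ[ℤ] (Fin n → ℤ) := Fintype.linearCombination ℤ v with hL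
  have hLψ : ∀ f : Fin k → ℕ, L (fun i => (f i : ℤ)) = (ι (∏ i, e i ^ f i)).toAdd := by
    intro f
    rw [hL, Fintype.linearCombination_apply, map_prod, toAdd_prod]
    exact Finset.sum_congr rfl fun i _ => by
      rw [map_pow, toAdd_pow, Nat.cast_smul_eq_nsmul]
  have hLsurj : Function.Surjective L := by
    intro y
    obtain ⟨a, b, heq⟩ := hfrac (Multiplicative.ofAdd y)
    obtain ⟨fa, ha⟩ := hsurj a
    obtain ⟨fb, hb⟩ := hsurj b
    refine ⟨(fun i => (fb i : ℤ)) - (fun i => (fa i : ℤ)), ?_⟩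
    have hy : y = -(ι a).toAdd + (ι b).toAdd := by
      have := congrArg Multiplicative.toAdd heq
      simpa using this
    rw [map_sub, hLψ, hLψ, ← ha, ← hb, hy]
    abel
  have hLker : ∀ z : Fin k → ℤ, L z = 0 → z = 0 := by
    intro z hz
    set zp : Fin k → ℕ := fun i => (z i).toNat with hzp
    set zn : Fin k → ℕ := fun i => (-(z i)).toNat with hzn
    have hzdec : (fun i => (zp i : ℤ)) - (fun i => (zn i : ℤ)) = z := by
      funext i
      exact Int.toNat_sub_toNat_neg (z i)
    have hLeq : L (fun i => (zp i : ℤ)) = L (fun i => (zn i : ℤ)) := by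
      have : L ((fun i => (zp i : ℤ)) - fun i => (zn i : ℤ)) = 0 := by rw [hzdec, hz]
      rw [map_sub, sub_eq_zero] at this
      exact this
    rw [hLψ, hLψ] at hLeq
    have hιeq : ι (∏ i, e i ^ zp i) = ι (∏ i, e i ^ zn i) :=
      Multiplicative.toAdd.injective hLeq
    have : zp = zn := hinjψ zp zn (hinj hιeq)
    funext i
    have h1 : (zp i : ℤ) - (zn i : ℤ) = z i := congrFun hzdec i
    rw [this] at h1
    simpa using h1.symm
  have hLinj : Function.Injective L := by
    intro z1 z2 h
    have := hLker (z1 - z2) (by rw [map_sub, h, sub_self])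
    exact sub_eq_zero.mp this
  set eL : (Fin k → ℤ) ≃ₗ[ℤ] (Fin n → ℤ) := LinearEquiv.ofBijective L ⟨hLinj, hLsurj⟩ with heL
  set σ : Fin k ≃ Fin n :=
    ((Pi.basisFun ℤ (Fin k)).map eL).indexEquiv (Pi.basisFun ℤ (Fin n)) with hσ
  set E2 : (Fin k → ℕ) ≃+ (Fin n → ℕ) :=
    { Equiv.arrowCongr σ (Equiv.refl ℕ) with map_add' := fun f g => rfl } with hE2
  exact ⟨((MulEquiv.ofBijective Ψ hΨbij).symm).trans (AddEquiv.toMultiplicative E2)⟩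

end GarsideAux

/-- `(ℕⁿ, +)` (written multiplicatively via `Multiplicative`) is a Garside monoid whose
group of fractions is `(ℤⁿ, +)`, and it is the unique Garside monoid with this group of
fractions, up to monoid isomorphism. -/
theorem freeAbelian_group_of_fractions_unique_garside (n : ℕ) :
    (IsGarsideMonoid (Multiplicative (Fin n → ℕ)) ∧
      ∃ ι : Multiplicative (Fin n → ℕ) →* Multiplicative (Fin n → ℤ),
        Function.Injective ι ∧
        ∀ g : Multiplicative (Fin n → ℤ),
          ∃ a b : Multiplicative (Fin n → ℕ), g = (ι a)⁻¹ * ι b) ∧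
    ∀ (M : Type v) (_ : Monoid M), IsGarsideMonoid M →
      ∀ ι : M →* Multiplicative (Fin n → ℤ), Function.Injective ι →
        (∀ g : Multiplicative (Fin n → ℤ), ∃ a b : M, g = (ι a)⁻¹ * ι b) →
        Nonempty (M ≃* Multiplicative (Fin n → ℕ)) := by
  constructor
  · exact ⟨GarsideAux.nat_garside, GarsideAux.natCastHom, GarsideAux.natCastHom_inj,
      GarsideAux.natCastHom_frac⟩
  · intro M instM hM ι hinj hfrac
    letI : CancelCommMonoid M :=
      { instM with
        mul_comm := fun a b => hinj (by rw [map_mul, map_mul, mul_comm])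
        mul_left_cancel := fun {a b c} h => hM.mul_left_cancel a b c h }
    obtain ⟨ν, hν, hνm⟩ := hM.atomic
    obtain ⟨Δ, _, hD2, hD3⟩ := hM.garside
    exact GarsideAux.garside_comm_iso hM.conical ν hν hνm hM.right_lcm _ hD2 hD3 ι hinj hfrac
end

section
/- Let M be a Garside monoid. For a, b ∈ M let a ∨ b denote the (unique) right lcm of a and b, and let a\b denote the unique element with a ∨ b = a·(a\b). Then for all a, b, c ∈ M the following identities hold: (ab) ∨ (ac) = a(b ∨ c); c\(ab) = (c\a)·((a\c)\b); (ab)\c = b\(a\c); (a ∨ b)\c = (a\b)\(a\c) = (b\a)\(b\c); and c\(a ∨ b) = (c\a) ∨ (c\b). -/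
namespace GarsideAux

variable {M : Type*} [Monoid M]

theorem eq_one_of_mul_eq_one (hM : IsGarsideMonoid M) {u v : M} (h : u * v = 1) :
    u = 1 ∧ v = 1 := by
  obtain ⟨ν, hpos, hadd⟩ := hM.atomic
  have h1 : ν (1 : M) = 0 := by
    have := hadd 1 1
    rw [one_mul] at this
    omega
  have huv := hadd u v
  rw [h, h1] at huv
  constructor
  · by_contra hu
    have := hpos u hu
    omega
  · by_contra hv
    have := hpos v hv
    omega

theorem leftdvd_antisymm (hM : IsGarsideMonoid M) {x y : M}
    (h1 : LeftDvd x y) (h2 : LeftDvd y x) : x = y := by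
  obtain ⟨u, hu⟩ := h1
  obtain ⟨v, hv⟩ := h2
  rw [hu, mul_assoc] at hv
  have : u * v = 1 := hM.mul_left_cancel x (u * v) 1 (by rw [mul_one]; exact hv.symm)
  have := (eq_one_of_mul_eq_one hM this).1
  rw [hu, this, mul_one]

variable (hM : IsGarsideMonoid M) (lcm rc : M → M → M)
    (hlcm : ∀ a b : M, IsRightLcm a b (lcm a b))
    (hrc : ∀ a b : M, lcm a b = a * rc a b)

include hM hlcm

theorem lcm_uniq {a b c : M} (h : IsRightLcm a b c) : lcm a b = c := by
  obtain ⟨u, hu⟩ := h.2.2 (lcm a b) (hlcm a b).1 (hlcm a b).2.1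
  obtain ⟨v, hv⟩ := (hlcm a b).2.2 c h.1 h.2.1
  exact (leftdvd_antisymm hM ⟨u, hu⟩ ⟨v, hv⟩).symm

theorem lcm_comm (a b : M) : lcm a b = lcm b a := by
  refine lcm_uniq hM lcm hlcm ?_
  obtain ⟨h1, h2, h3⟩ := hlcm b a
  exact ⟨h2, h1, fun d hd1 hd2 => h3 d hd2 hd1⟩

include hrc

theorem lcm_mul (a b c : M) : lcm (a * b) (a * c) = a * lcm b c := by
  refine lcm_uniq hM lcm hlcm ?_
  refine ⟨⟨rc b c, by rw [hrc b c, mul_assoc]⟩,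
    ⟨rc c b, by rw [lcm_comm hM lcm hlcm b c, hrc c b, mul_assoc]⟩, ?_⟩
  rintro d ⟨x, hx⟩ ⟨y, hy⟩
  have hcy : c * y = b * x := by
    apply hM.mul_left_cancel a
    rw [← mul_assoc, ← mul_assoc, ← hx, ← hy]
  obtain ⟨z, hz⟩ := (hlcm b c).2.2 (b * x) ⟨x, rfl⟩ ⟨y, hcy.symm⟩
  exact ⟨z, by rw [hx, mul_assoc, hz, ← mul_assoc]⟩

/-- Key lemma: `a * ((a\c) ∨ b)` is the right lcm of `a*b` and `c`. -/
theorem key (a b c : M) : IsRightLcm (a * b) c (a * lcm (rc a c) b) := by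
  have e1 : lcm (rc a c) b = rc a c * rc (rc a c) b := hrc _ _
  have e2 : lcm (rc a c) b = b * rc b (rc a c) := by
    rw [lcm_comm hM lcm hlcm, hrc]
  have e3 : a * rc a c = c * rc c a := by
    rw [← hrc, lcm_comm hM lcm hlcm, hrc]
  refine ⟨⟨rc b (rc a c), by rw [e2, mul_assoc]⟩,
    ⟨rc c a * rc (rc a c) b, ?_⟩, ?_⟩
  · rw [e1, ← mul_assoc, e3, mul_assoc]
  · rintro d ⟨x, hx⟩ ⟨y, hy⟩
    obtain ⟨z, hz⟩ := (hlcm a c).2.2 d ⟨b * x, by rw [hx, mul_assoc]⟩ ⟨y, hy⟩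
    rw [hrc, mul_assoc] at hz
    have hbx : b * x = rc a c * z := by
      apply hM.mul_left_cancel a
      rw [← hz, hx, mul_assoc]
    obtain ⟨w, hw⟩ := (hlcm (rc a c) b).2.2 (b * x) ⟨z, hbx⟩ ⟨x, rfl⟩
    exact ⟨w, by rw [hx, mul_assoc a b x, hw, ← mul_assoc]⟩

theorem lcm_mul_left (a b c : M) : lcm (a * b) c = a * lcm (rc a c) b :=
  lcm_uniq hM lcm hlcm (key hM lcm rc hlcm hrc a b c)

end GarsideAux

/-- In a Garside monoid, with `lcm a b` the right lcm `a ∨ b` and `rc a b` the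
unique element `a \ b` with `a ∨ b = a · (a \ b)`, the lcm identities hold. -/
theorem garside_lcm_identities {M : Type*} [Monoid M] (hM : IsGarsideMonoid M)
    (lcm rc : M → M → M)
    (hlcm : ∀ a b : M, IsRightLcm a b (lcm a b))
    (hrc : ∀ a b : M, lcm a b = a * rc a b) :
    ∀ a b c : M,
      lcm (a * b) (a * c) = a * lcm b c ∧
      rc c (a * b) = rc c a * rc (rc a c) b ∧
      rc (a * b) c = rc b (rc a c) ∧
      rc (lcm a b) c = rc (rc a b) (rc a c) ∧
      rc (lcm a b) c = rc (rc b a) (rc b c) ∧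
      rc c (lcm a b) = lcm (rc c a) (rc c b) := by
  have comm := GarsideAux.lcm_comm hM lcm hlcm
  have muni := GarsideAux.lcm_mul_left hM lcm rc hlcm hrc
  have e3 : ∀ x y : M, x * rc x y = y * rc y x := fun x y => by
    rw [← hrc, comm, hrc]
  -- item 3 : rc (a*b) c = rc b (rc a c)
  have item3 : ∀ a b c : M, rc (a * b) c = rc b (rc a c) := by
    intro a b c
    apply hM.mul_left_cancel (a * b)
    rw [← hrc, muni, comm (rc a c) b, hrc b (rc a c), ← mul_assoc]
  -- item 2 : rc c (a*b) = rc c a * rc (rc a c) b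
  have item2 : ∀ a b c : M, rc c (a * b) = rc c a * rc (rc a c) b := by
    intro a b c
    apply hM.mul_left_cancel c
    rw [← hrc, ← comm, muni, hrc (rc a c) b, ← mul_assoc, e3 a c, mul_assoc]
  -- item 6 : rc c (lcm a b) = lcm (rc c a) (rc c b)
  have item6 : ∀ a b c : M, rc c (lcm a b) = lcm (rc c a) (rc c b) := by
    intro a b c
    refine GarsideAux.leftdvd_antisymm hM ?_ ?_
    · -- rc c (lcm a b) left-divides lcm (rc c a) (rc c b)
      set X := c * lcm (rc c a) (rc c b) with hX
      have ha : LeftDvd a X := by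
        refine ⟨rc a c * rc (rc c a) (rc c b), ?_⟩
        rw [hX, hrc (rc c a) (rc c b), ← mul_assoc, ← e3 a c, mul_assoc]
      have hb : LeftDvd b X := by
        refine ⟨rc b c * rc (rc c b) (rc c a), ?_⟩
        rw [hX, comm (rc c a) (rc c b), hrc (rc c b) (rc c a), ← mul_assoc,
          ← e3 b c, mul_assoc]
      have hab : LeftDvd (lcm a b) X := (hlcm a b).2.2 X ha hb
      obtain ⟨r, hr⟩ := (hlcm c (lcm a b)).2.2 X ⟨lcm (rc c a) (rc c b), rfl⟩ hab
      refine ⟨r, hM.mul_left_cancel c _ _ ?_⟩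
      rw [← hX, hr, hrc, mul_assoc]
    · -- lcm (rc c a) (rc c b) left-divides rc c (lcm a b)
      have hca : LeftDvd (rc c a) (rc c (lcm a b)) := by
        obtain ⟨p, hp⟩ := (hlcm c a).2.2 (lcm c (lcm a b)) (hlcm c (lcm a b)).1
          (by
            obtain ⟨q, hq⟩ := (hlcm c (lcm a b)).2.1
            obtain ⟨s, hs⟩ := (hlcm a b).1
            exact ⟨s * q, by rw [hq, hs, mul_assoc]⟩)
        refine ⟨p, hM.mul_left_cancel c _ _ ?_⟩
        rw [← hrc, hp, hrc c a, mul_assoc]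
      have hcb : LeftDvd (rc c b) (rc c (lcm a b)) := by
        obtain ⟨p, hp⟩ := (hlcm c b).2.2 (lcm c (lcm a b)) (hlcm c (lcm a b)).1
          (by
            obtain ⟨q, hq⟩ := (hlcm c (lcm a b)).2.1
            obtain ⟨s, hs⟩ := (hlcm a b).2.1
            exact ⟨s * q, by rw [hq, hs, mul_assoc]⟩)
        refine ⟨p, hM.mul_left_cancel c _ _ ?_⟩
        rw [← hrc, hp, hrc c b, mul_assoc]
      exact (hlcm (rc c a) (rc c b)).2.2 _ hca hcb
  intro a b c
  refine ⟨GarsideAux.lcm_mul hM lcm rc hlcm hrc a b c, item2 a b c, item3 a b c,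
    ?_, ?_, item6 a b c⟩
  · rw [hrc a b, item3 a (rc a b) c]
  · rw [comm a b, hrc b a, item3 b (rc b a) c]
end

section
/- The presented monoid M_κ = ⟨x, y : x·y·x·y·x = y·y⟩⁺ is a Garside monoid, and M_κ admits no additive norm: there is no map ν : M_κ → ℕ with ν(a) > 0 for every a ≠ 1 and ν(ab) = ν(a) + ν(b) for all a, b ∈ M_κ. -/
/-- The relation `x·y·x·y·x = y·y`, with `false ↦ x`, `true ↦ y`. -/
def relKappa : FreeMonoid Bool → FreeMonoid Bool → Prop := fun u v =>
  u = FreeMonoid.of false * FreeMonoid.of true * FreeMonoid.of false *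
        FreeMonoid.of true * FreeMonoid.of false ∧
  v = FreeMonoid.of true * FreeMonoid.of true


namespace Kappa

abbrev W := List Bool

/-- letters: `false` = x, `true` = y -/
def r1l : W := [false, true, false, true, false]
def r1r : W := [true, true]
def r2l : W := [true, true, true, false]
def r2r : W := [false, true, true, true]

inductive Step : W → W → Prop
  | r1 (A C : W) : Step (A ++ r1l ++ C) (A ++ r1r ++ C)
  | r2 (A C : W) : Step (A ++ r2l ++ C) (A ++ r2r ++ C)

lemma Step.r1' {s t : W} (A C : W) (hs : s = A ++ r1l ++ C) (ht : t = A ++ r1r ++ C) :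
    Step s t := hs ▸ ht ▸ Step.r1 A C

lemma Step.r2' {s t : W} (A C : W) (hs : s = A ++ r2l ++ C) (ht : t = A ++ r2r ++ C) :
    Step s t := hs ▸ ht ▸ Step.r2 A C

lemma step_cons {s t : W} (a : Bool) (h : Step s t) : Step (a :: s) (a :: t) := by
  cases h with
  | r1 A C => exact Step.r1' (a :: A) C rfl rfl
  | r2 A C => exact Step.r2' (a :: A) C rfl rfl

lemma step_append_left {s t : W} (P : W) (h : Step s t) : Step (P ++ s) (P ++ t) := by
  induction P with
  | nil => simpa using h
  | cons a P ih => exact step_cons a ih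

lemma step_append_right {s t : W} (P : W) (h : Step s t) : Step (s ++ P) (t ++ P) := by
  cases h with
  | r1 A C => exact Step.r1' A (C ++ P) (by simp) (by simp)
  | r2 A C => exact Step.r2' A (C ++ P) (by simp) (by simp)

/-- count of x's -/
def cx (w : W) : ℕ := w.count false

lemma cx_append (u v : W) : cx (u ++ v) = cx u + cx v := List.count_append

/-- termination measure: sum over positions of number of x's strictly after it -/
def mu : W → ℕ
  | [] => 0
  | _ :: t => cx t + mu t

lemma mu_append (u v : W) : mu (u ++ v) = mu u + cx v * u.length + mu v := by
  induction u with
  | nil => simp [mu]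
  | cons a u ih => simp [mu, cx_append, ih]; ring

lemma step_mu {s t : W} (h : Step s t) : mu t < mu s := by
  cases h with
  | r1 A C =>
    have h1 : mu (A ++ r1l ++ C) = mu A + 3 * A.length + 6 + cx C * (A.length + 5) + mu C := by
      rw [List.append_assoc, mu_append, mu_append]
      simp [cx_append, r1l, cx, mu]; ring
    have h2 : mu (A ++ r1r ++ C) = mu A + cx C * (A.length + 2) + mu C := by
      rw [List.append_assoc, mu_append, mu_append]
      simp [cx_append, r1r, cx, mu]; ring
    rw [h1, h2]; nlinarith [Nat.zero_le (cx C)]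
  | r2 A C =>
    have h1 : mu (A ++ r2l ++ C) = mu A + A.length + 3 + cx C * (A.length + 4) + mu C := by
      rw [List.append_assoc, mu_append, mu_append]
      simp [cx_append, r2l, cx, mu]; ring
    have h2 : mu (A ++ r2r ++ C) = mu A + A.length + cx C * (A.length + 4) + mu C := by
      rw [List.append_assoc, mu_append, mu_append]
      simp [cx_append, r2r, cx, mu]; ring
    omega

/-- head reduction -/
def hd? : W → Option W
  | false :: true :: false :: true :: false :: t => some (true :: true :: t)
  | true :: true :: true :: false :: t => some (false :: true :: true :: true :: t)
  | _ => none

/-- leftmost reduction -/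
def red? : W → Option W
  | [] => none
  | a :: t =>
    match hd? (a :: t) with
    | some w => some w
    | none => (red? t).map (a :: ·)

lemma hd?_some {w w' : W} (h : hd? w = some w') :
    (∃ t, w = r1l ++ t ∧ w' = r1r ++ t) ∨ (∃ t, w = r2l ++ t ∧ w' = r2r ++ t) := by
  unfold hd? at h
  split at h
  · exact Or.inl ⟨_, rfl, by simpa [r1r] using h.symm⟩
  · exact Or.inr ⟨_, rfl, by simpa [r2r] using h.symm⟩
  · exact absurd h (by simp)

lemma red?_some {w w' : W} (h : red? w = some w') : Step w w' := by
  induction w generalizing w' with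
  | nil => simp [red?] at h
  | cons a t ih =>
    rw [red?] at h
    rcases hh : hd? (a :: t) with _ | u
    · rw [hh] at h
      simp only [Option.map_eq_some_iff] at h
      obtain ⟨t', ht', rfl⟩ := h
      exact step_cons a (ih ht')
    · rw [hh] at h
      cases h
      rcases hd?_some hh with ⟨s, hw, hw'⟩ | ⟨s, hw, hw'⟩
      · exact Step.r1' [] s (by simpa using hw) (by simpa using hw')
      · exact Step.r2' [] s (by simpa using hw) (by simpa using hw')

/-- normal (irreducible) words -/
def IsN (w : W) : Prop := ¬ (r1l <:+: w) ∧ ¬ (r2l <:+: w)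

lemma hd?_none_iff {w : W} : hd? w = none ↔ ¬ (r1l <+: w) ∧ ¬ (r2l <+: w) := by
  constructor
  · intro h
    constructor
    · rintro ⟨t, rfl⟩; simp [hd?, r1l] at h
    · rintro ⟨t, rfl⟩; simp [hd?, r2l] at h
  · intro ⟨h1, h2⟩
    unfold hd?
    split
    · exact absurd ⟨_, rfl⟩ h1
    · exact absurd ⟨_, rfl⟩ h2
    · rfl

lemma red?_none_iff {w : W} : red? w = none ↔ IsN w := by
  induction w with
  | nil => simp [red?, IsN, r1l, r2l]
  | cons a t ih =>
    rw [red?]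
    constructor
    · intro h
      rcases hh : hd? (a :: t) with _ | u
      · rw [hh] at h
        simp only [Option.map_eq_none_iff] at h
        have ht := ih.1 h
        rw [hd?_none_iff] at hh
        constructor
        · intro hinf
          rcases List.infix_cons_iff.1 hinf with hp | hi
          · exact hh.1 hp
          · exact ht.1 hi
        · intro hinf
          rcases List.infix_cons_iff.1 hinf with hp | hi
          · exact hh.2 hp
          · exact ht.2 hi
      · rw [hh] at h; cases h
    · intro ⟨h1, h2⟩
      have hh : hd? (a :: t) = none := by
        rw [hd?_none_iff]
        exact ⟨fun hp => h1 hp.isInfix, fun hp => h2 hp.isInfix⟩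
      rw [hh]
      have : red? t = none := ih.2 ⟨fun hi => h1 (List.infix_cons_iff.2 (Or.inr hi)), fun hi => h2 (List.infix_cons_iff.2 (Or.inr hi))⟩
      simp [this]

lemma step_not_isN {s t : W} (h : Step s t) : ¬ IsN s := by
  cases h with
  | r1 A C => exact fun hn => hn.1 ⟨A, C, by simp⟩
  | r2 A C => exact fun hn => hn.2 ⟨A, C, by simp⟩

lemma red?_isSome_of_step {s t : W} (h : Step s t) : ∃ s', red? s = some s' := by
  rcases hr : red? s with _ | s'
  · exact absurd (red?_none_iff.1 hr) (step_not_isN h)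
  · exact ⟨s', rfl⟩

def nf (w : W) : W :=
  match h : red? w with
  | none => w
  | some w' => nf w'
termination_by mu w
decreasing_by exact step_mu (red?_some h)

lemma nf_of_none {w : W} (h : red? w = none) : nf w = w := by
  rw [nf, h]

lemma nf_of_some {w w' : W} (h : red? w = some w') : nf w = nf w' := by
  rw [nf, h]

lemma nf_of_isN {w : W} (h : IsN w) : nf w = w := nf_of_none (red?_none_iff.2 h)

abbrev Star := Relation.ReflTransGen Step

lemma star_to_nf (w : W) : Star w (nf w) := by
  rcases hr : red? w with _ | w'
  · rw [nf_of_none hr]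
  · rw [nf_of_some hr]
    exact Relation.ReflTransGen.head (red?_some hr) (star_to_nf w')
termination_by mu w
decreasing_by exact step_mu (red?_some hr)

lemma isN_nf (w : W) : IsN (nf w) := by
  rcases hr : red? w with _ | w'
  · rw [nf_of_none hr]; exact red?_none_iff.1 hr
  · rw [nf_of_some hr]; exact isN_nf w'
termination_by mu w
decreasing_by exact step_mu (red?_some hr)




lemma join11 (A D C₁ C₂ : W) (h : r1l ++ C₁ = D ++ (r1l ++ C₂)) :
    ∃ u, Star (A ++ r1r ++ C₁) u ∧ Star ((A ++ D) ++ r1r ++ C₂) u := by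
  rcases List.append_eq_append_iff.1 h with ⟨E, rfl, rfl⟩ | ⟨E, hD, hC⟩
  · exact ⟨A ++ r1r ++ (E ++ r1r ++ C₂),
      .single (Step.r1' (A ++ r1r ++ E) C₂ (by simp) (by simp)),
      .single (Step.r1' A (E ++ r1r ++ C₂) (by simp) (by simp))⟩
  · have hmem : D ∈ r1l.inits := (List.mem_inits _ _).2 ⟨E, hD.symm⟩
    have : D = [] ∨ D = [false] ∨ D = [false, true] ∨ D = [false, true, false] ∨
        D = [false, true, false, true] ∨ D = r1l := by
      simpa [r1l, List.inits] using hmem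
    rcases this with rfl|rfl|rfl|rfl|rfl|rfl
    · simp only [List.nil_append] at hD
      rw [← hD] at hC
      simp only [List.append_cancel_left_eq] at hC
      subst hC
      exact ⟨A ++ r1r ++ C₂, by simp [Relation.ReflTransGen.refl], by simp [Relation.ReflTransGen.refl]⟩
    · simp only [r1l, List.cons.injEq, List.singleton_append, true_and] at hD
      subst hD
      simp [r1l] at hC
    · have hE : E = [false, true, false] := by
        have := hD; simp only [r1l, List.cons_append, List.nil_append, List.cons.injEq, true_and] at this; exact this.symm
      subst hE
      have hC1 : C₁ = [true, false] ++ C₂ := by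
        have := hC
        simp only [r1l, List.cons_append, List.nil_append, List.cons.injEq, true_and] at this
        exact this.symm
      subst hC1
      refine ⟨A ++ [false, true, true, true] ++ C₂, .single ?_, ?_⟩
      · exact Step.r2' A C₂ (by simp [r1r, r2l]) (by simp [r2r])
      · have : (A ++ [false, true]) ++ r1r ++ C₂ = A ++ [false, true, true, true] ++ C₂ := by
          simp [r1r]
        rw [this]
    · have hE : E = [true, false] := by
        have := hD; simp only [r1l, List.cons_append, List.nil_append, List.cons.injEq, true_and] at this; exact this.symm
      subst hE
      simp [r1l] at hC
    · have hE : E = [false] := by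
        have := hD; simp only [r1l, List.cons_append, List.nil_append, List.cons.injEq, true_and] at this; exact this.symm
      subst hE
      have hC1 : C₁ = [true, false, true, false] ++ C₂ := by
        have := hC
        simp only [r1l, List.cons_append, List.nil_append, List.cons.injEq, true_and] at this
        exact this.symm
      subst hC1
      refine ⟨A ++ [false, true, false, true, true, true] ++ C₂,
        .head (b := A ++ [false, true, true, true] ++ ([true, false] ++ C₂)) ?_ (.single ?_), ?_⟩
      · exact Step.r2' A ([true, false] ++ C₂) (by simp [r1r, r2l]) (by simp [r2r])
      · exact Step.r2' (A ++ [false, true]) C₂ (by simp [r2l, r2r]) (by simp [r2l, r2r])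
      · have : (A ++ [false, true, false, true]) ++ r1r ++ C₂ =
            A ++ [false, true, false, true, true, true] ++ C₂ := by simp [r1r]
        rw [this]
    · have hE : E = [] := by
        have := hD; simp only [r1l, List.cons_append, List.nil_append, List.cons.injEq, true_and] at this; exact this.symm
      subst hE
      simp only [List.nil_append] at hC
      rw [← hC]
      refine ⟨A ++ r1r ++ (r1r ++ C₂), .single ?_, .single ?_⟩
      · exact Step.r1' (A ++ r1r) C₂ (by simp) (by simp)
      · exact Step.r1' A (r1r ++ C₂) (by simp [r1l]) (by simp)



lemma join12 (A D C₁ C₂ : W) (h : r1l ++ C₁ = D ++ (r2l ++ C₂)) :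
    ∃ u, Star (A ++ r1r ++ C₁) u ∧ Star ((A ++ D) ++ r2r ++ C₂) u := by
  rcases List.append_eq_append_iff.1 h with ⟨E, rfl, rfl⟩ | ⟨E, hD, hC⟩
  · exact ⟨A ++ r1r ++ (E ++ r2r ++ C₂),
      .single (Step.r2' (A ++ r1r ++ E) C₂ (by simp) (by simp)),
      .single (Step.r1' A (E ++ r2r ++ C₂) (by simp) (by simp))⟩
  · have hmem : D ∈ r1l.inits := (List.mem_inits _ _).2 ⟨E, hD.symm⟩
    have : D = [] ∨ D = [false] ∨ D = [false, true] ∨ D = [false, true, false] ∨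
        D = [false, true, false, true] ∨ D = r1l := by
      simpa [r1l, List.inits] using hmem
    rcases this with rfl|rfl|rfl|rfl|rfl|rfl
    · simp only [List.nil_append] at hD; subst hD
      simp [r2l, r1l] at hC
    · have hE : E = [true, false, true, false] := by
        have := hD; simp only [r1l, List.cons_append, List.nil_append, List.cons.injEq,
          true_and] at this; exact this.symm
      subst hE; simp [r2l] at hC
    · have hE : E = [false, true, false] := by
        have := hD; simp only [r1l, List.cons_append, List.nil_append, List.cons.injEq,
          true_and] at this; exact this.symm
      subst hE; simp [r2l] at hC
    · have hE : E = [true, false] := by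
        have := hD; simp only [r1l, List.cons_append, List.nil_append, List.cons.injEq,
          true_and] at this; exact this.symm
      subst hE; simp [r2l] at hC
    · have hE : E = [false] := by
        have := hD; simp only [r1l, List.cons_append, List.nil_append, List.cons.injEq,
          true_and] at this; exact this.symm
      subst hE; simp [r2l] at hC
    · have hE : E = [] := by
        have := hD; simp only [r1l, List.cons_append, List.nil_append, List.cons.injEq,
          true_and] at this; exact this.symm
      subst hE
      simp only [List.nil_append] at hC
      rw [← hC]
      refine ⟨A ++ r1r ++ (r2r ++ C₂), .single ?_, .single ?_⟩
      · exact Step.r2' (A ++ r1r) C₂ (by simp) (by simp)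
      · exact Step.r1' A (r2r ++ C₂) (by simp [r1l]) (by simp)

lemma join21 (A D C₁ C₂ : W) (h : r2l ++ C₁ = D ++ (r1l ++ C₂)) :
    ∃ u, Star (A ++ r2r ++ C₁) u ∧ Star ((A ++ D) ++ r1r ++ C₂) u := by
  rcases List.append_eq_append_iff.1 h with ⟨E, rfl, rfl⟩ | ⟨E, hD, hC⟩
  · exact ⟨A ++ r2r ++ (E ++ r1r ++ C₂),
      .single (Step.r1' (A ++ r2r ++ E) C₂ (by simp) (by simp)),
      .single (Step.r2' A (E ++ r1r ++ C₂) (by simp) (by simp))⟩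
  · have hmem : D ∈ r2l.inits := (List.mem_inits _ _).2 ⟨E, hD.symm⟩
    have : D = [] ∨ D = [true] ∨ D = [true, true] ∨ D = [true, true, true] ∨ D = r2l := by
      simpa [r2l, List.inits] using hmem
    rcases this with rfl|rfl|rfl|rfl|rfl
    · simp only [List.nil_append] at hD; subst hD
      simp [r2l, r1l] at hC
    · have hE : E = [true, true, false] := by
        have := hD; simp only [r2l, List.cons_append, List.nil_append, List.cons.injEq,
          true_and] at this; exact this.symm
      subst hE; simp [r1l] at hC
    · have hE : E = [true, false] := by
        have := hD; simp only [r2l, List.cons_append, List.nil_append, List.cons.injEq,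
          true_and] at this; exact this.symm
      subst hE; simp [r1l] at hC
    · have hE : E = [false] := by
        have := hD; simp only [r2l, List.cons_append, List.nil_append, List.cons.injEq,
          true_and] at this; exact this.symm
      subst hE
      have hC1 : C₁ = [true, false, true, false] ++ C₂ := by
        have := hC
        simp only [r1l, List.cons_append, List.nil_append, List.cons.injEq, true_and] at this
        exact this.symm
      subst hC1
      refine ⟨A ++ [true, true, true, true, true] ++ C₂,
        .head (b := A ++ [false, true, false, true, true, true, true, false] ++ C₂) ?_
          (.head (b := A ++ [false, true, false, true, false] ++ ([true, true, true] ++ C₂)) ?_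
            (.single ?_)), ?_⟩
      · exact Step.r2' (A ++ [false, true]) ([true, false] ++ C₂)
          (by simp [r2r, r2l]) (by simp [r2r])
      · exact Step.r2' (A ++ [false, true, false, true]) C₂
          (by simp [r2l]) (by simp [r2r])
      · exact Step.r1' A ([true, true, true] ++ C₂) (by simp [r1l]) (by simp [r1r])
      · have : (A ++ [true, true, true]) ++ r1r ++ C₂ =
            A ++ [true, true, true, true, true] ++ C₂ := by simp [r1r]
        rw [this]
    · have hE : E = [] := by
        have := hD; simp only [r2l, List.cons_append, List.nil_append, List.cons.injEq,
          true_and] at this; exact this.symm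
      subst hE
      simp only [List.nil_append] at hC
      rw [← hC]
      refine ⟨A ++ r2r ++ (r1r ++ C₂), .single ?_, .single ?_⟩
      · exact Step.r1' (A ++ r2r) C₂ (by simp) (by simp)
      · exact Step.r2' A (r1r ++ C₂) (by simp [r2l]) (by simp)

lemma join22 (A D C₁ C₂ : W) (h : r2l ++ C₁ = D ++ (r2l ++ C₂)) :
    ∃ u, Star (A ++ r2r ++ C₁) u ∧ Star ((A ++ D) ++ r2r ++ C₂) u := by
  rcases List.append_eq_append_iff.1 h with ⟨E, rfl, rfl⟩ | ⟨E, hD, hC⟩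
  · exact ⟨A ++ r2r ++ (E ++ r2r ++ C₂),
      .single (Step.r2' (A ++ r2r ++ E) C₂ (by simp) (by simp)),
      .single (Step.r2' A (E ++ r2r ++ C₂) (by simp) (by simp))⟩
  · have hmem : D ∈ r2l.inits := (List.mem_inits _ _).2 ⟨E, hD.symm⟩
    have : D = [] ∨ D = [true] ∨ D = [true, true] ∨ D = [true, true, true] ∨ D = r2l := by
      simpa [r2l, List.inits] using hmem
    rcases this with rfl|rfl|rfl|rfl|rfl
    · simp only [List.nil_append] at hD
      rw [← hD] at hC
      simp only [List.append_cancel_left_eq] at hC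
      subst hC
      exact ⟨A ++ r2r ++ C₂, by simp [Relation.ReflTransGen.refl],
        by simp [Relation.ReflTransGen.refl]⟩
    · have hE : E = [true, true, false] := by
        have := hD; simp only [r2l, List.cons_append, List.nil_append, List.cons.injEq,
          true_and] at this; exact this.symm
      subst hE; simp [r2l] at hC
    · have hE : E = [true, false] := by
        have := hD; simp only [r2l, List.cons_append, List.nil_append, List.cons.injEq,
          true_and] at this; exact this.symm
      subst hE; simp [r2l] at hC
    · have hE : E = [false] := by
        have := hD; simp only [r2l, List.cons_append, List.nil_append, List.cons.injEq,
          true_and] at this; exact this.symm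
      subst hE; simp [r2l] at hC
    · have hE : E = [] := by
        have := hD; simp only [r2l, List.cons_append, List.nil_append, List.cons.injEq,
          true_and] at this; exact this.symm
      subst hE
      simp only [List.nil_append] at hC
      rw [← hC]
      refine ⟨A ++ r2r ++ (r2r ++ C₂), .single ?_, .single ?_⟩
      · exact Step.r2' (A ++ r2r) C₂ (by simp) (by simp)
      · exact Step.r2' A (r2r ++ C₂) (by simp [r2l]) (by simp)

lemma step_iff {s t : W} : Step s t ↔
    (∃ A C, s = A ++ r1l ++ C ∧ t = A ++ r1r ++ C) ∨
    (∃ A C, s = A ++ r2l ++ C ∧ t = A ++ r2r ++ C) := by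
  constructor
  · rintro (⟨A, C⟩ | ⟨A, C⟩)
    · exact Or.inl ⟨A, C, rfl, rfl⟩
    · exact Or.inr ⟨A, C, rfl, rfl⟩
  · rintro (⟨A, C, rfl, rfl⟩ | ⟨A, C, rfl, rfl⟩)
    · exact Step.r1 A C
    · exact Step.r2 A C

lemma local_confl {s t₁ t₂ : W} (h1 : Step s t₁) (h2 : Step s t₂) :
    ∃ u, Star t₁ u ∧ Star t₂ u := by
  rcases step_iff.1 h1 with ⟨A₁, C₁, rfl, rfl⟩ | ⟨A₁, C₁, rfl, rfl⟩ <;>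
    rcases step_iff.1 h2 with ⟨A₂, C₂, hs, rfl⟩ | ⟨A₂, C₂, hs, rfl⟩
  · rcases List.append_eq_append_iff.1
      (by simpa [List.append_assoc] using hs : A₁ ++ (r1l ++ C₁) = A₂ ++ (r1l ++ C₂)) with
      ⟨D, rfl, hw⟩ | ⟨D, rfl, hw⟩
    · obtain ⟨u, s1, s2⟩ := join11 A₁ D C₁ C₂ hw
      exact ⟨u, s1, by simpa [List.append_assoc] using s2⟩
    · obtain ⟨u, s1, s2⟩ := join11 A₂ D C₂ C₁ hw
      exact ⟨u, by simpa [List.append_assoc] using s2, s1⟩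
  · rcases List.append_eq_append_iff.1
      (by simpa [List.append_assoc] using hs : A₁ ++ (r1l ++ C₁) = A₂ ++ (r2l ++ C₂)) with
      ⟨D, rfl, hw⟩ | ⟨D, rfl, hw⟩
    · obtain ⟨u, s1, s2⟩ := join12 A₁ D C₁ C₂ hw
      exact ⟨u, s1, by simpa [List.append_assoc] using s2⟩
    · obtain ⟨u, s1, s2⟩ := join21 A₂ D C₂ C₁ hw
      exact ⟨u, by simpa [List.append_assoc] using s2, s1⟩
  · rcases List.append_eq_append_iff.1
      (by simpa [List.append_assoc] using hs : A₁ ++ (r2l ++ C₁) = A₂ ++ (r1l ++ C₂)) with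
      ⟨D, rfl, hw⟩ | ⟨D, rfl, hw⟩
    · obtain ⟨u, s1, s2⟩ := join21 A₁ D C₁ C₂ hw
      exact ⟨u, s1, by simpa [List.append_assoc] using s2⟩
    · obtain ⟨u, s1, s2⟩ := join12 A₂ D C₂ C₁ hw
      exact ⟨u, by simpa [List.append_assoc] using s2, s1⟩
  · rcases List.append_eq_append_iff.1
      (by simpa [List.append_assoc] using hs : A₁ ++ (r2l ++ C₁) = A₂ ++ (r2l ++ C₂)) with
      ⟨D, rfl, hw⟩ | ⟨D, rfl, hw⟩
    · obtain ⟨u, s1, s2⟩ := join22 A₁ D C₁ C₂ hw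
      exact ⟨u, s1, by simpa [List.append_assoc] using s2⟩
    · obtain ⟨u, s1, s2⟩ := join22 A₂ D C₂ C₁ hw
      exact ⟨u, by simpa [List.append_assoc] using s2, s1⟩





lemma nf_step_aux : ∀ n s t, mu s ≤ n → Step s t → nf t = nf s := by
  intro n
  induction n with
  | zero =>
    intro s t hm h
    have := step_mu h; omega
  | succ n ih =>
    intro s t hm h
    obtain ⟨s₀, hr⟩ := red?_isSome_of_step h
    have hst : Step s s₀ := red?_some hr
    obtain ⟨u, hu1, hu2⟩ := local_confl h hst
    have key : ∀ v w, Star v w → mu v ≤ n → nf w = nf v := by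
      intro v w hvw
      induction hvw using Relation.ReflTransGen.head_induction_on with
      | refl => intro _; rfl
      | head hstep htail ihtail =>
        rename_i a c
        intro ha
        have hc : mu c ≤ n := by have := step_mu hstep; omega
        rw [ihtail hc]
        exact ih a c ha hstep
    have h1 : nf u = nf t := key t u hu1 (by have := step_mu h; omega)
    have h2 : nf u = nf s₀ := key s₀ u hu2 (by have := step_mu hst; omega)
    rw [← h1, h2, nf_of_some hr]

lemma step_nf {s t : W} (h : Step s t) : nf t = nf s := nf_step_aux (mu s) s t le_rfl h

lemma star_nf {s t : W} (h : Star s t) : nf t = nf s := by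
  induction h with
  | refl => rfl
  | tail hab hbc ih => rw [← ih]; exact step_nf hbc

lemma star_append_left {s t : W} (P : W) (h : Star s t) : Star (P ++ s) (P ++ t) := by
  induction h with
  | refl => exact .refl
  | tail hab hbc ih => exact ih.tail (step_append_left P hbc)

lemma star_append_right {s t : W} (P : W) (h : Star s t) : Star (s ++ P) (t ++ P) := by
  induction h with
  | refl => exact .refl
  | tail hab hbc ih => exact ih.tail (step_append_right P hbc)

lemma nf_append (u v : W) : nf (u ++ v) = nf (nf u ++ nf v) := by
  have h1 : Star (u ++ v) (nf u ++ v) := star_append_right v (star_to_nf u)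
  have h2 : Star (nf u ++ v) (nf u ++ nf v) := star_append_left (nf u) (star_to_nf v)
  rw [← star_nf (h1.trans h2)]

lemma nf_nf (w : W) : nf (nf w) = nf w := nf_of_isN (isN_nf w)

end Kappa

namespace Kappa

open FreeMonoid

lemma relKappa_def : relKappa (ofList r1l) (ofList r1r) := ⟨rfl, rfl⟩

lemma cong_rule1 : ConGen.Rel relKappa (ofList r1l) (ofList r1r) :=
  ConGen.Rel.of _ _ relKappa_def

lemma cong_rule2 : ConGen.Rel relKappa (ofList r2l) (ofList r2r) := by
  have h1 : ConGen.Rel relKappa (ofList r1r * ofList [true, false])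
      (ofList r1l * ofList [true, false]) :=
    ConGen.Rel.mul (ConGen.Rel.symm cong_rule1) (ConGen.Rel.refl _)
  have h2 : ConGen.Rel relKappa (ofList [false, true] * ofList r1l)
      (ofList [false, true] * ofList r1r) :=
    ConGen.Rel.mul (ConGen.Rel.refl _) cong_rule1
  exact ConGen.Rel.trans h1 h2

lemma cong_step {s t : W} (h : Step s t) : ConGen.Rel relKappa (ofList s) (ofList t) := by
  cases h with
  | r1 A C =>
    rw [List.append_assoc, ofList_append, ofList_append, List.append_assoc,
      ofList_append, ofList_append]
    exact ConGen.Rel.mul (ConGen.Rel.refl _) (ConGen.Rel.mul cong_rule1 (ConGen.Rel.refl _))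
  | r2 A C =>
    rw [List.append_assoc, ofList_append, ofList_append, List.append_assoc,
      ofList_append, ofList_append]
    exact ConGen.Rel.mul (ConGen.Rel.refl _) (ConGen.Rel.mul cong_rule2 (ConGen.Rel.refl _))

lemma cong_star {s t : W} (h : Star s t) : ConGen.Rel relKappa (ofList s) (ofList t) := by
  induction h with
  | refl => exact ConGen.Rel.refl _
  | tail hab hbc ih => exact ih.trans (cong_step hbc)

lemma cong_iff_nf {u v : FreeMonoid Bool} :
    ConGen.Rel relKappa u v ↔ nf u.toList = nf v.toList := by
  constructor
  · intro h
    induction h with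
    | of a b hab =>
      obtain ⟨ha, hb⟩ := hab
      subst ha; subst hb
      exact (step_nf (Step.r1' [] [] (by simp [r1l]) (by simp [r1r]))).symm
    | refl => rfl
    | symm _ ih => exact ih.symm
    | trans _ _ ih1 ih2 => exact ih1.trans ih2
    | mul _ _ ih1 ih2 =>
      rename_i w xx y z _ _
      show nf (w.toList ++ y.toList) = nf (xx.toList ++ z.toList)
      rw [nf_append, ih1, ih2, ← nf_append]
  · intro h
    have h1 := cong_star (star_to_nf u.toList)
    have h2 := cong_star (star_to_nf v.toList)
    rw [h] at h1
    exact (h1.trans h2.symm)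

abbrev M := PresentedMonoid relKappa

def pm (w : W) : M := PresentedMonoid.mk relKappa (ofList w)

lemma pm_append (u v : W) : pm (u ++ v) = pm u * pm v := by
  unfold pm
  rw [ofList_append, map_mul]

lemma pm_eq_iff {u v : W} : pm u = pm v ↔ nf u = nf v := by
  constructor
  · intro h
    have : (conGen relKappa) (ofList u) (ofList v) := (Con.eq _).1 h
    exact cong_iff_nf.1 this
  · intro h
    exact (Con.eq _).2 (cong_iff_nf.2 h)

def nfq (m : M) : W := Con.liftOn m (fun w => nf (FreeMonoid.toList w))
  (fun _ _ h => cong_iff_nf.1 h)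

lemma nfq_pm (w : W) : nfq (pm w) = nf w := rfl

lemma pm_nfq (m : M) : pm (nfq m) = m := by
  refine PresentedMonoid.inductionOn m ?_
  intro a
  show pm (nf a.toList) = _
  have : pm (nf a.toList) = pm a.toList := pm_eq_iff.2 (nf_nf _)
  rw [this]
  rfl

lemma nfq_injective : Function.Injective nfq := by
  intro a b h
  rw [← pm_nfq a, ← pm_nfq b, h]

lemma nf_nil : nf ([] : W) = [] := nf_of_none rfl

lemma pm_nil : pm [] = 1 := rfl

lemma pm_eq_one_iff {w : W} : pm w = 1 ↔ nf w = [] := by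
  rw [show (1 : M) = pm [] from rfl, pm_eq_iff, nf_nil]

lemma prefix_append_cases {l v k : W} (h : l <+: v ++ k) :
    l <+: v ∨ ∃ w, l = v ++ w ∧ w <+: k := by
  obtain ⟨e, he⟩ := h
  rcases List.append_eq_append_iff.1 he with ⟨a', ha, _⟩ | ⟨c', hl, hk⟩
  · exact Or.inl ⟨a', ha.symm⟩
  · exact Or.inr ⟨c', hl, ⟨e, hk.symm⟩⟩

lemma isN_tail {a : Bool} {u : W} (h : IsN (a :: u)) : IsN u :=
  ⟨fun hi => h.1 (List.infix_cons_iff.2 (Or.inr hi)),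
   fun hi => h.2 (List.infix_cons_iff.2 (Or.inr hi))⟩

lemma isN_cons {a : Bool} {u : W} (h : IsN u) (h1 : ¬ r1l <+: a :: u)
    (h2 : ¬ r2l <+: a :: u) : IsN (a :: u) := by
  constructor
  · intro hi
    rcases List.infix_cons_iff.1 hi with hp | hi'
    · exact h1 hp
    · exact h.1 hi'
  · intro hi
    rcases List.infix_cons_iff.1 hi with hp | hi'
    · exact h2 hp
    · exact h.2 hi'

lemma isN_concat_y {v : W} (h : IsN v) : IsN (v ++ [true]) := by
  constructor
  · rintro ⟨s, e, hse⟩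
    rcases e.eq_nil_or_concat with rfl | ⟨e', c, rfl⟩
    · -- s ++ r1l = v ++ [true]
      rw [List.append_nil] at hse
      have : (s ++ [false, true, false, true]) ++ [false] = v ++ [true] := by
        simpa [r1l] using hse
      have := (List.append_inj' this (by simp)).2
      simp at this
    · have : (s ++ r1l ++ e') ++ [c] = v ++ [true] := by
        simpa using hse
      have h2 := (List.append_inj' this (by simp)).1
      exact h.1 ⟨s, e', h2⟩
  · rintro ⟨s, e, hse⟩
    rcases e.eq_nil_or_concat with rfl | ⟨e', c, rfl⟩
    · rw [List.append_nil] at hse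
      have : (s ++ [true, true, true]) ++ [false] = v ++ [true] := by
        simpa [r2l] using hse
      have := (List.append_inj' this (by simp)).2
      simp at this
    · have : (s ++ r2l ++ e') ++ [c] = v ++ [true] := by
        simpa using hse
      have h2 := (List.append_inj' this (by simp)).1
      exact h.2 ⟨s, e', h2⟩

lemma isN_concat_y3 {v : W} (h : IsN v) : IsN (v ++ [true, true, true]) := by
  have h1 := isN_concat_y (isN_concat_y (isN_concat_y h))
  simpa using h1

def py (u : W) : W :=
  match u with
  | true :: true :: false :: v => false :: (v ++ [true, true, true])
  | _ => true :: u

def px (u : W) : W :=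
  match u with
  | true :: false :: true :: false :: v => py (py v)
  | _ => false :: u

lemma py_match (v : W) : py (true :: true :: false :: v) = false :: (v ++ [true, true, true]) :=
  rfl

lemma py_else {u : W} (h : ¬ ∃ v, u = true :: true :: false :: v) : py u = true :: u := by
  rcases u with _ | ⟨a, _ | ⟨b, _ | ⟨c, v⟩⟩⟩
  · rfl
  · cases a <;> rfl
  · cases a <;> cases b <;> rfl
  · cases a <;> cases b <;> cases c <;> first
      | rfl
      | exact absurd ⟨v, rfl⟩ h

lemma px_match (v : W) : px (true :: false :: true :: false :: v) = py (py v) := rfl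

lemma px_else {u : W} (h : ¬ ∃ v, u = true :: false :: true :: false :: v) :
    px u = false :: u := by
  rcases u with _ | ⟨a, _ | ⟨b, _ | ⟨c, _ | ⟨d, v⟩⟩⟩⟩
  · rfl
  · cases a <;> rfl
  · cases a <;> cases b <;> rfl
  · cases a <;> cases b <;> cases c <;> rfl
  · cases a <;> cases b <;> cases c <;> cases d <;> first
      | rfl
      | exact absurd ⟨v, rfl⟩ h

lemma isN_py {u : W} (h : IsN u) : IsN (py u) := by
  by_cases hm : ∃ v, u = true :: true :: false :: v
  · obtain ⟨v, rfl⟩ := hm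
    rw [py_match]
    have hv : IsN v := isN_tail (isN_tail (isN_tail h))
    have hv3 : IsN (v ++ [true, true, true]) := isN_concat_y3 hv
    refine isN_cons hv3 ?_ ?_
    · intro hp
      have hp' : [true, false, true, false] <+: v ++ [true, true, true] := by
        rw [show r1l = false :: [true, false, true, false] from rfl] at hp
        exact (List.prefix_cons_inj _).1 hp
      rcases prefix_append_cases hp' with hpv | ⟨w, hw, hwp⟩
      · obtain ⟨v', rfl⟩ := hpv
        exact h.1 ⟨[true, true], v', by simp [r1l]⟩
      · have hwmem : w = [] ∨ w = [true] ∨ w = [true, true] ∨ w = [true, true, true] := by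
          simpa [List.inits] using (List.mem_inits _ _).2 hwp
        rcases hwmem with rfl | rfl | rfl | rfl
        · rw [List.append_nil] at hw
          subst hw
          exact h.1 ⟨[true, true], [], by simp [r1l]⟩
        · rcases v with _ | ⟨a, _ | ⟨b, _ | ⟨c, _ | ⟨d, v'⟩⟩⟩⟩ <;> simp_all
        · rcases v with _ | ⟨a, _ | ⟨b, _ | ⟨c, _ | ⟨d, v'⟩⟩⟩⟩ <;> simp_all
        · rcases v with _ | ⟨a, _ | ⟨b, _ | ⟨c, _ | ⟨d, v'⟩⟩⟩⟩ <;> simp_all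
    · intro hp
      simp [r2l, List.cons_prefix_cons] at hp
  · rw [py_else hm]
    refine isN_cons h ?_ ?_
    · intro hp
      simp [r1l, List.cons_prefix_cons] at hp
    · intro hp
      obtain ⟨e, he⟩ := hp
      have he' : true :: true :: true :: false :: e = true :: u := by simpa [r2l] using he
      have : u = true :: true :: false :: e := by
        have := congrArg List.tail he'
        simpa using this.symm
      exact hm ⟨e, this⟩


lemma isN_px {u : W} (h : IsN u) : IsN (px u) := by
  by_cases hm : ∃ v, u = true :: false :: true :: false :: v
  · obtain ⟨v, rfl⟩ := hm
    rw [px_match]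
    exact isN_py (isN_py (isN_tail (isN_tail (isN_tail (isN_tail h)))))
  · rw [px_else hm]
    refine isN_cons h ?_ ?_
    · intro hp
      obtain ⟨e, he⟩ := hp
      have he' : false :: true :: false :: true :: false :: e = false :: u := by
        simpa [r1l] using he
      have : u = true :: false :: true :: false :: e := by
        have := congrArg List.tail he'
        simpa using this.symm
      exact hm ⟨e, this⟩
    · intro hp
      simp [r2l, List.cons_prefix_cons] at hp

lemma pm_step {s t : W} (h : Step s t) : pm s = pm t := pm_eq_iff.2 (step_nf h).symm

lemma pm_cons (a : Bool) (u : W) : pm (a :: u) = pm [a] * pm u := by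
  rw [← pm_append]; rfl

lemma comm3 (v : W) : pm ([true, true, true] ++ v) = pm (v ++ [true, true, true]) := by
  induction v with
  | nil => simp
  | cons a v ih =>
    cases a
    · have h1 : pm ([true, true, true] ++ false :: v) = pm (false :: ([true, true, true] ++ v)) :=
        pm_step (Step.r2' [] v (by simp [r2l]) (by simp [r2r]))
      rw [h1, pm_cons, ih, ← pm_cons]
      rfl
    · have h1 : pm ([true, true, true] ++ true :: v) = pm (true :: ([true, true, true] ++ v)) := rfl
      rw [h1, pm_cons, ih, ← pm_cons]
      rfl

lemma py_cong (u : W) : pm (true :: u) = pm (py u) := by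
  by_cases hm : ∃ v, u = true :: true :: false :: v
  · obtain ⟨v, rfl⟩ := hm
    rw [py_match]
    have h1 : pm (true :: true :: true :: false :: v) = pm (false :: true :: true :: true :: v) :=
      pm_step (Step.r2' [] v (by simp [r2l]) (by simp [r2r]))
    rw [h1, pm_cons false (true :: true :: true :: v), pm_cons false (v ++ [true, true, true]),
      show (true :: true :: true :: v : W) = [true, true, true] ++ v from rfl, comm3]
  · rw [py_else hm]

lemma px_cong (u : W) : pm (false :: u) = pm (px u) := by
  by_cases hm : ∃ v, u = true :: false :: true :: false :: v
  · obtain ⟨v, rfl⟩ := hm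
    rw [px_match]
    have h1 : pm (false :: true :: false :: true :: false :: v) = pm (true :: true :: v) :=
      pm_step (Step.r1' [] v (by simp [r1l]) (by simp [r1r]))
    rw [h1, pm_cons true (true :: v), py_cong v, ← pm_cons true (py v), py_cong (py v)]
  · rw [px_else hm]

lemma nf_cons_y {u : W} (h : IsN u) : nf (true :: u) = py u := by
  have h1 := pm_eq_iff.1 (py_cong u)
  rw [h1, nf_of_isN (isN_py h)]

lemma nf_cons_x {u : W} (h : IsN u) : nf (false :: u) = px u := by
  have h1 := pm_eq_iff.1 (px_cong u)
  rw [h1, nf_of_isN (isN_px h)]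

lemma py_inj {u u' : W} (h : py u = py u') : u = u' := by
  by_cases hm : ∃ v, u = true :: true :: false :: v <;>
    by_cases hm' : ∃ v, u' = true :: true :: false :: v
  · obtain ⟨v, rfl⟩ := hm
    obtain ⟨v', rfl⟩ := hm'
    rw [py_match, py_match] at h
    simp only [List.cons.injEq, true_and] at h
    rw [(List.append_inj' h rfl).1]
  · obtain ⟨v, rfl⟩ := hm
    rw [py_match, py_else hm'] at h
    simp at h
  · obtain ⟨v', rfl⟩ := hm'
    rw [py_match, py_else hm] at h
    simp at h
  · rw [py_else hm, py_else hm'] at h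
    simpa using h

lemma py_py_head {v : W} (hN : IsN (true :: false :: true :: false :: v)) :
    ∃ w, py (py v) = true :: w := by
  by_cases hm : ∃ v₂, v = true :: true :: false :: v₂
  · obtain ⟨v₂, rfl⟩ := hm
    rw [py_match]
    rw [py_else (by rintro ⟨w, hw⟩; simp at hw)]
    exact ⟨_, rfl⟩
  · rw [py_else hm]
    by_cases hm2 : ∃ v₂, v = true :: false :: v₂
    · obtain ⟨v₂, rfl⟩ := hm2
      exact absurd ⟨[true], v₂, by simp [r1l]⟩ hN.1
    · rw [py_else (by rintro ⟨w, hw⟩; exact hm2 ⟨w, by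
        have := congrArg List.tail hw; simpa using this⟩)]
      exact ⟨_, rfl⟩

lemma px_inj {u u' : W} (hu : IsN u) (hu' : IsN u') (h : px u = px u') : u = u' := by
  by_cases hm : ∃ v, u = true :: false :: true :: false :: v <;>
    by_cases hm' : ∃ v, u' = true :: false :: true :: false :: v
  · obtain ⟨v, rfl⟩ := hm
    obtain ⟨v', rfl⟩ := hm'
    rw [px_match, px_match] at h
    rw [py_inj (py_inj h)]
  · obtain ⟨v, rfl⟩ := hm
    rw [px_match, px_else hm'] at h
    obtain ⟨w, hw⟩ := py_py_head hu
    rw [hw] at h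
    simp at h
  · obtain ⟨v', rfl⟩ := hm'
    rw [px_match, px_else hm] at h
    obtain ⟨w, hw⟩ := py_py_head hu'
    rw [hw] at h
    simp at h
  · rw [px_else hm, px_else hm'] at h
    simpa using h

lemma key_lemma {u v : W} (h : px u = py v) :
    ∃ w, pm (false :: u) = pm [true, true] * pm w := by
  by_cases hm : ∃ v₀, u = true :: false :: true :: false :: v₀
  · obtain ⟨v₀, rfl⟩ := hm
    refine ⟨v₀, ?_⟩
    have h1 : pm (false :: true :: false :: true :: false :: v₀) = pm (true :: true :: v₀) :=
      pm_step (Step.r1' [] v₀ (by simp [r1l]) (by simp [r1r]))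
    rw [h1, show (true :: true :: v₀ : W) = [true, true] ++ v₀ from rfl, pm_append]
  · rw [px_else hm] at h
    by_cases hm' : ∃ v₂, v = true :: true :: false :: v₂
    · obtain ⟨v₂, rfl⟩ := hm'
      rw [py_match] at h
      have hu : u = v₂ ++ [true, true, true] := by
        have := congrArg List.tail h
        simpa using this
      refine ⟨true :: false :: v₂, ?_⟩
      rw [hu, show (false :: (v₂ ++ [true, true, true]) : W) =
        (false :: v₂) ++ [true, true, true] from rfl, ← comm3,
        show ([true, true, true] ++ (false :: v₂) : W) =
          [true, true] ++ (true :: false :: v₂) from rfl, pm_append]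
    · rw [py_else hm'] at h
      simp at h


/-! ### The superadditive weight -/

def g (n : ℕ) : ℤ := 5 * n - 3 * ((n % 3 + 2) / 3)

def G : ℕ → W → ℤ
  | n, [] => g n
  | n, false :: t => g n + 1 + G 0 t
  | n, true :: t => G (n + 1) t

def F (w : W) : ℤ := G 0 w

lemma g_superadd (a b : ℕ) : g a + g b ≤ g (a + b) := by unfold g; omega

lemma g_ineq1 (n k : ℕ) : g n + 3 + 2 * g 1 + g k ≤ g (n + 2 + k) := by unfold g; omega

lemma g_ineq2 (n k : ℕ) : g (n + 3) + g k ≤ g n + g (3 + k) := by unfold g; omega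

lemma g_ge (n : ℕ) : 2 * (n : ℤ) ≤ g n := by unfold g; omega

lemma G_split (C : W) : ∃ (k : ℕ) (R : ℤ), ∀ m, G m C = g (m + k) + R := by
  induction C with
  | nil => exact ⟨0, 0, fun m => by simp [G]⟩
  | cons a t ih =>
    cases a
    · exact ⟨0, 1 + G 0 t, fun m => by simp [G]; ring⟩
    · obtain ⟨k, R, hk⟩ := ih
      exact ⟨k + 1, R, fun m => by
        show G (m + 1) t = _
        rw [hk]
        congr 2
        omega⟩

lemma G_context {P Q : W} (h : ∀ n, G n P ≤ G n Q) : ∀ (A : W) (n), G n (A ++ P) ≤ G n (A ++ Q) := by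
  intro A
  induction A with
  | nil => exact h
  | cons a t ih =>
    intro n
    cases a
    · show g n + 1 + G 0 (t ++ P) ≤ g n + 1 + G 0 (t ++ Q)
      have := ih 0; omega
    · exact ih (n + 1)

lemma F_step {s t : W} (h : Step s t) : F s ≤ F t := by
  cases h with
  | r1 A C =>
    rw [List.append_assoc, List.append_assoc]
    refine G_context (fun n => ?_) A 0
    obtain ⟨k, R, hk⟩ := G_split C
    have h1 : G n (r1l ++ C) = g n + 3 + 2 * g 1 + G 0 C := by
      show G n (false :: true :: false :: true :: false :: C) = _
      simp only [G]
      ring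
    have h2 : G n (r1r ++ C) = G (n + 2) C := rfl
    rw [h1, h2, hk, hk]
    have := g_ineq1 n (0 + k)
    have harg : n + 2 + (0 + k) = n + 2 + k := by omega
    rw [harg] at this
    omega
  | r2 A C =>
    rw [List.append_assoc, List.append_assoc]
    refine G_context (fun n => ?_) A 0
    obtain ⟨k, R, hk⟩ := G_split C
    have h1 : G n (r2l ++ C) = g (n + 3) + 1 + G 0 C := rfl
    have h2 : G n (r2r ++ C) = g n + 1 + G 3 C := by
      show g n + 1 + G 0 (true :: true :: true :: C) = _
      rfl
    rw [h1, h2, hk, hk]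
    have := g_ineq2 n (0 + k)
    have harg : 3 + (0 + k) = 3 + k := by omega
    rw [harg] at this
    have harg2 : (3 : ℕ) + k = 3 + (0 + k) := by omega
    omega

lemma G_shift (t : W) : ∀ a b, g a + G b t ≤ G (a + b) t := by
  induction t with
  | nil => exact fun a b => g_superadd a b
  | cons c t ih =>
    intro a b
    cases c
    · show g a + (g b + 1 + G 0 t) ≤ g (a + b) + 1 + G 0 t
      have := g_superadd a b; omega
    · show g a + G (b + 1) t ≤ G (a + b + 1) t
      have := ih a (b + 1)
      have harg : a + (b + 1) = a + b + 1 := by omega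
      rwa [harg] at this

lemma F_append (u v : W) : F u + F v ≤ F (u ++ v) := by
  suffices h : ∀ (u : W) (n), G n u + F v ≤ G n (u ++ v) from h u 0
  intro u
  induction u with
  | nil =>
    intro n
    have := G_shift v n 0
    simpa [G, F] using this
  | cons a t ih =>
    intro n
    cases a
    · show g n + 1 + G 0 t + F v ≤ g n + 1 + G 0 (t ++ v)
      have := ih 0; omega
    · exact ih (n + 1)

lemma G_length (w : W) : ∀ n : ℕ, 2 * (n : ℤ) + w.length ≤ G n w := by
  induction w with
  | nil => intro n; simpa [G] using g_ge n
  | cons a t ih =>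
    intro n
    cases a
    · show 2 * (n : ℤ) + (t.length + 1) ≤ g n + 1 + G 0 t
      have h1 := ih 0
      have h2 := g_ge n
      simp at h1
      omega
    · show 2 * (n : ℤ) + (t.length + 1) ≤ G (n + 1) t
      have := ih (n + 1)
      push_cast at this ⊢
      omega

lemma F_length (w : W) : (w.length : ℤ) ≤ F w := by
  have := G_length w 0
  simpa [F] using this

lemma F_nonneg (w : W) : 0 ≤ F w := le_trans (by positivity) (F_length w)

lemma F_star {s t : W} (h : Star s t) : F s ≤ F t := by
  induction h with
  | refl => exact le_refl _
  | tail hab hbc ih => exact le_trans ih (F_step hbc)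

/-! ### the norm on M -/

lemma isN_nfq (m : M) : IsN (nfq m) := by
  refine PresentedMonoid.inductionOn m ?_
  intro a
  exact isN_nf a.toList

def nu (m : M) : ℕ := (F (nfq m)).toNat

lemma nfq_eq_nil_iff {m : M} : nfq m = [] ↔ m = 1 := by
  constructor
  · intro h
    rw [← pm_nfq m, h, pm_nil]
  · rintro rfl
    show nf [] = []
    exact nf_nil

lemma nu_pos {m : M} (h : m ≠ 1) : 0 < nu m := by
  have hne : nfq m ≠ [] := fun hh => h (nfq_eq_nil_iff.1 hh)
  have h1 : (1 : ℤ) ≤ (nfq m).length := by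
    have : (nfq m).length ≠ 0 := fun hh => hne (List.length_eq_zero_iff.1 hh)
    omega
  have := F_length (nfq m)
  unfold nu
  omega

lemma mul_eq_pm (a b : M) : a * b = pm (nfq a ++ nfq b) := by
  rw [pm_append, pm_nfq, pm_nfq]

lemma nfq_mul (a b : M) : nfq (a * b) = nf (nfq a ++ nfq b) := by
  rw [mul_eq_pm]; exact nfq_pm _

lemma nu_superadd (a b : M) : nu a + nu b ≤ nu (a * b) := by
  have h1 : F (nfq a) + F (nfq b) ≤ F (nfq a ++ nfq b) := F_append _ _
  have h2 : F (nfq a ++ nfq b) ≤ F (nf (nfq a ++ nfq b)) := F_star (star_to_nf _)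
  have h3 := F_nonneg (nfq a)
  have h4 := F_nonneg (nfq b)
  unfold nu
  rw [nfq_mul]
  omega


/-! ### cancellation -/

lemma cancel_letter {a : Bool} {b c : M} (h : pm [a] * b = pm [a] * c) : b = c := by
  have hb := pm_nfq b
  have hc := pm_nfq c
  rw [← hb, ← hc, ← pm_append, ← pm_append] at h
  have h2 : nf (a :: nfq b) = nf (a :: nfq c) := pm_eq_iff.1 h
  cases a
  · rw [nf_cons_x (isN_nfq b), nf_cons_x (isN_nfq c)] at h2
    rw [← hb, ← hc, px_inj (isN_nfq b) (isN_nfq c) h2]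
  · rw [nf_cons_y (isN_nfq b), nf_cons_y (isN_nfq c)] at h2
    rw [← hb, ← hc, py_inj h2]

lemma cancel_left_word : ∀ (w : W) {b c : M}, pm w * b = pm w * c → b = c := by
  intro w
  induction w with
  | nil =>
    intro b c h
    simpa [pm_nil] using h
  | cons a t ih =>
    intro b c h
    rw [pm_cons, mul_assoc, mul_assoc] at h
    exact ih (cancel_letter h)

lemma cancel_left {a b c : M} (h : a * b = a * c) : b = c := by
  rw [← pm_nfq a] at h
  exact cancel_left_word _ h

/-! ### reversal -/

open FreeMonoid in
lemma cong_reverse {u v : FreeMonoid Bool} (h : ConGen.Rel relKappa u v) :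
    ConGen.Rel relKappa (ofList u.toList.reverse) (ofList v.toList.reverse) := by
  induction h with
  | of a b hab =>
    obtain ⟨ha, hb⟩ := hab
    subst ha hb
    exact ConGen.Rel.of _ _ ⟨rfl, rfl⟩
  | refl x => exact ConGen.Rel.refl _
  | symm _ ih => exact ih.symm
  | trans _ _ ih1 ih2 => exact ih1.trans ih2
  | mul h1 h2 ih1 ih2 =>
    rename_i w xx y z
    have e1 : ofList ((w * y).toList.reverse) =
        ofList (y.toList.reverse) * ofList (w.toList.reverse) := by
      show ofList ((w.toList ++ y.toList).reverse) = _
      rw [List.reverse_append, ofList_append]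
    have e2 : ofList ((xx * z).toList.reverse) =
        ofList (z.toList.reverse) * ofList (xx.toList.reverse) := by
      show ofList ((xx.toList ++ z.toList).reverse) = _
      rw [List.reverse_append, ofList_append]
    rw [e1, e2]
    exact ConGen.Rel.mul ih2 ih1

def rev (m : M) : M := Con.liftOn m (fun w => pm w.toList.reverse)
  (fun _ _ h => (Con.eq _).2 (cong_reverse h))

lemma rev_pm (w : W) : rev (pm w) = pm w.reverse := rfl

lemma rev_mul (a b : M) : rev (a * b) = rev b * rev a := by
  refine PresentedMonoid.inductionOn₂ a b ?_
  intro u v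
  show rev (pm (u.toList ++ v.toList)) = rev (pm v.toList) * rev (pm u.toList)
  rw [rev_pm, rev_pm, rev_pm, List.reverse_append, pm_append]

lemma rev_rev (m : M) : rev (rev m) = m := by
  refine PresentedMonoid.inductionOn m ?_
  intro u
  show rev (rev (pm u.toList)) = pm u.toList
  rw [rev_pm, rev_pm, List.reverse_reverse]

lemma rev_inj {a b : M} (h : rev a = rev b) : a = b := by
  rw [← rev_rev a, h, rev_rev]

lemma cancel_right {a b c : M} (h : b * a = c * a) : b = c := by
  have : rev a * rev b = rev a * rev c := by rw [← rev_mul, ← rev_mul, h]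
  exact rev_inj (cancel_left this)

/-! ### divisibility -/

def X : M := pm [false]
def Y : M := pm [true]
def Y2 : M := pm [true, true]
def Dm : M := pm [true, true, true]

lemma x_alpha : X * pm [true, false, true, false] = Y2 := by
  show pm [false] * pm [true, false, true, false] = Y2
  rw [← pm_append]
  exact pm_step (Step.r1' [] [] (by simp [r1l]) (by simp [r1r]))

lemma y_alpha : Y * pm [true] = Y2 := by
  show pm [true] * pm [true] = Y2
  rw [← pm_append]
  rfl

lemma key_M {d : M} (hx : LeftDvd X d) (hy : LeftDvd Y d) : LeftDvd Y2 d := by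
  obtain ⟨a, ha⟩ := hx
  obtain ⟨b, hb⟩ := hy
  have hda : d = pm (false :: nfq a) := by
    rw [pm_cons]
    show d = pm [false] * pm (nfq a)
    rw [pm_nfq a]
    exact ha
  have hdb : d = pm (true :: nfq b) := by
    rw [pm_cons]
    show d = pm [true] * pm (nfq b)
    rw [pm_nfq b]
    exact hb
  have h2 : nf (false :: nfq a) = nf (true :: nfq b) := pm_eq_iff.1 (hda ▸ hdb ▸ rfl)
  rw [nf_cons_x (isN_nfq a), nf_cons_y (isN_nfq b)] at h2
  obtain ⟨w, hw⟩ := key_lemma h2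
  exact ⟨pm w, by rw [hda, hw]; rfl⟩

lemma delta_comm (m : M) : Dm * m = m * Dm := by
  refine PresentedMonoid.inductionOn m ?_
  intro u
  show pm [true, true, true] * pm u.toList = pm u.toList * pm [true, true, true]
  rw [← pm_append, ← pm_append, comm3]

lemma delta_pow_comm (k : ℕ) (m : M) : Dm ^ k * m = m * Dm ^ k := by
  induction k with
  | zero => simp
  | succ n ih =>
    rw [pow_succ, mul_assoc, delta_comm, ← mul_assoc, ih, mul_assoc]

lemma letter_dvd_delta (a : Bool) : ∃ c, pm [a] * c = Dm := by
  cases a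
  · refine ⟨pm [true, false, true, false, true], ?_⟩
    rw [← pm_append]
    show pm (r1l ++ [true]) = Dm
    have : Step (r1l ++ [true]) (r1r ++ [true]) :=
      Step.r1' [] [true] (by simp) (by simp)
    rw [pm_step this]
    rfl
  · exact ⟨pm [true, true], by rw [← pm_append]; rfl⟩

lemma dvd_delta_pow (w : W) : LeftDvd (pm w) (Dm ^ w.length) := by
  induction w with
  | nil => exact ⟨1, by simp [pm_nil]⟩
  | cons a t ih =>
    obtain ⟨e, he⟩ := ih
    obtain ⟨ca, hca⟩ := letter_dvd_delta a
    refine ⟨e * ca, ?_⟩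
    show Dm ^ (t.length + 1) = pm (a :: t) * (e * ca)
    rw [pm_cons, pow_succ']
    calc Dm * Dm ^ t.length = pm [a] * ca * Dm ^ t.length := by rw [hca]
      _ = pm [a] * (Dm ^ t.length * ca) := by
          rw [mul_assoc, ← delta_pow_comm]
      _ = pm [a] * (pm t * e * ca) := by rw [he]
      _ = pm [a] * (pm t * (e * ca)) := by rw [mul_assoc]
      _ = pm [a] * pm t * (e * ca) := by rw [mul_assoc]

lemma leftDvd_trans {a b c : M} (h1 : LeftDvd a b) (h2 : LeftDvd b c) : LeftDvd a c := by
  obtain ⟨u, rfl⟩ := h1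
  obtain ⟨v, rfl⟩ := h2
  exact ⟨u * v, mul_assoc _ _ _⟩

lemma common_mult (a b : M) : ∃ d, LeftDvd a d ∧ LeftDvd b d := by
  refine ⟨Dm ^ ((nfq a).length + (nfq b).length), ?_, ?_⟩
  · refine leftDvd_trans ?_ ⟨Dm ^ (nfq b).length, (pow_add _ _ _)⟩
    have := dvd_delta_pow (nfq a)
    rwa [pm_nfq a] at this
  · refine leftDvd_trans ?_ ⟨Dm ^ (nfq a).length, by rw [← pow_add, Nat.add_comm]⟩
    have := dvd_delta_pow (nfq b)
    rwa [pm_nfq b] at this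

lemma nu_one : nu (1 : M) = 0 := by
  unfold nu
  rw [show nfq (1 : M) = [] from nfq_eq_nil_iff.2 rfl]
  rfl

lemma eq_one_of_leftDvd_one {a : M} (h : LeftDvd a 1) : a = 1 := by
  obtain ⟨c, hc⟩ := h
  by_contra hne
  have h1 := nu_pos hne
  have h2 := nu_superadd a c
  rw [← hc, nu_one] at h2
  omega

lemma gen_decomp {m : M} (h : m ≠ 1) : ∃ (a : Bool) (m' : M), m = pm [a] * m' := by
  rcases hw : nfq m with _ | ⟨a, t⟩
  · exact absurd (nfq_eq_nil_iff.1 hw) h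
  · exact ⟨a, pm t, by rw [← pm_nfq m, hw, pm_cons]⟩


/-! ### lcm existence -/

lemma isN_letter (a : Bool) : IsN [a] := by
  cases a <;> exact ⟨by decide, by decide⟩

lemma pm_letter_ne_one (a : Bool) : pm [a] ≠ 1 := by
  intro h
  have := pm_eq_one_iff.1 h
  rw [nf_of_isN (isN_letter a)] at this
  simp at this

lemma Y2_ne_one : Y2 ≠ 1 := by
  intro h
  have := pm_eq_one_iff.1 h
  rw [nf_of_isN (⟨by decide, by decide⟩ : IsN [true, true])] at this
  simp at this

lemma lcm_shift {s : Bool} {a' b' c' : M} (h : IsRightLcm a' b' c') :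
    IsRightLcm (pm [s] * a') (pm [s] * b') (pm [s] * c') := by
  obtain ⟨⟨u, hu⟩, ⟨v, hv⟩, hmin⟩ := h
  refine ⟨⟨u, by rw [mul_assoc, ← hu]⟩, ⟨v, by rw [mul_assoc, ← hv]⟩, ?_⟩
  intro d hd1 hd2
  obtain ⟨p, hp⟩ := hd1
  have hd : d = pm [s] * (a' * p) := by rw [hp, mul_assoc]
  obtain ⟨q, hq⟩ := hd2
  have hd' : d = pm [s] * (b' * q) := by rw [hq, mul_assoc]
  have heq : a' * p = b' * q := cancel_letter (hd.symm.trans hd')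
  obtain ⟨r, hr⟩ := hmin (a' * p) ⟨p, rfl⟩ ⟨q, heq⟩
  exact ⟨r, by rw [hd, hr, mul_assoc]⟩

def alphaC (s : Bool) : M := if s then pm [true] else pm [true, false, true, false]

lemma halpha (s : Bool) : pm [s] * alphaC s = Y2 := by
  cases s
  · exact x_alpha
  · exact y_alpha

lemma letters_dvd {s t : Bool} (hst : s ≠ t) {e : M}
    (hs : LeftDvd (pm [s]) e) (ht : LeftDvd (pm [t]) e) :
    LeftDvd X e ∧ LeftDvd Y e := by
  cases s <;> cases t
  · exact absurd rfl hst
  · exact ⟨hs, ht⟩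
  · exact ⟨ht, hs⟩
  · exact absurd rfl hst

lemma lcm_aux (n : ℕ) : ∀ d a b : M, nu d ≤ n → LeftDvd a d → LeftDvd b d →
    ∃ c, IsRightLcm a b c ∧ LeftDvd c d := by
  induction n using Nat.strong_induction_on with
  | _ n ih =>
  intro d a b hn ha hb
  by_cases ha1 : a = 1
  · subst ha1
    exact ⟨b, ⟨⟨b, (one_mul b).symm⟩, ⟨1, (mul_one b).symm⟩, fun e _ h2 => h2⟩, hb⟩
  by_cases hb1 : b = 1
  · subst hb1
    exact ⟨a, ⟨⟨1, (mul_one a).symm⟩, ⟨a, (one_mul a).symm⟩, fun e h1 _ => h1⟩, ha⟩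
  obtain ⟨s, a', rfl⟩ := gen_decomp ha1
  obtain ⟨t, b', rfl⟩ := gen_decomp hb1
  obtain ⟨u, hu⟩ := ha
  have hd : d = pm [s] * (a' * u) := by rw [hu, mul_assoc]
  have hnud₁ : nu (a' * u) < nu d := by
    have h2 := nu_superadd (pm [s]) (a' * u)
    rw [← hd] at h2
    have h3 : 0 < nu (pm [s]) := nu_pos (pm_letter_ne_one s)
    omega
  by_cases hst : s = t
  · subst hst
    obtain ⟨v, hv⟩ := hb
    have hdv : pm [s] * (a' * u) = pm [s] * (b' * v) := by
      rw [← hd, hv, mul_assoc]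
    have hd₁b : a' * u = b' * v := cancel_letter hdv
    obtain ⟨c', hc', hc'd⟩ := ih (nu (a' * u)) (by omega) (a' * u) a' b' le_rfl
      ⟨u, rfl⟩ ⟨v, hd₁b⟩
    refine ⟨pm [s] * c', lcm_shift hc', ?_⟩
    obtain ⟨r, hr⟩ := hc'd
    exact ⟨r, by rw [hd, hr, mul_assoc]⟩
  · -- different initial letters
    obtain ⟨v, hv⟩ := hb
    have hd' : d = pm [t] * (b' * v) := by rw [hv, mul_assoc]
    have hnud₂ : nu (b' * v) < nu d := by
      have h2 := nu_superadd (pm [t]) (b' * v)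
      rw [← hd'] at h2
      have h3 : 0 < nu (pm [t]) := nu_pos (pm_letter_ne_one t)
      omega
    have hXY : LeftDvd X d ∧ LeftDvd Y d :=
      letters_dvd hst ⟨a' * u, hd⟩ ⟨b' * v, hd'⟩
    obtain ⟨w, hw⟩ := key_M hXY.1 hXY.2
    have hda : pm [s] * (a' * u) = pm [s] * (alphaC s * w) := by
      rw [← hd, hw, ← halpha s, mul_assoc]
    have hd₁2 : a' * u = alphaC s * w := cancel_letter hda
    obtain ⟨m₁, hm₁, hm₁d⟩ := ih (nu (a' * u)) (by omega) (a' * u) a' (alphaC s) le_rfl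
      ⟨u, rfl⟩ ⟨w, hd₁2⟩
    have hA_lcm : IsRightLcm (pm [s] * a') Y2 (pm [s] * m₁) := by
      have h5 := lcm_shift (s := s) hm₁
      rwa [halpha] at h5
    have hdb : pm [t] * (b' * v) = pm [t] * (alphaC t * w) := by
      rw [← hd', hw, ← halpha t, mul_assoc]
    have hd₂2 : b' * v = alphaC t * w := cancel_letter hdb
    obtain ⟨m₂, hm₂, hm₂d⟩ := ih (nu (b' * v)) (by omega) (b' * v) b' (alphaC t) le_rfl
      ⟨v, rfl⟩ ⟨w, hd₂2⟩
    have hB_lcm : IsRightLcm (pm [t] * b') Y2 (pm [t] * m₂) := by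
      have h5 := lcm_shift (s := t) hm₂
      rwa [halpha] at h5
    obtain ⟨e₁, he₁⟩ := hA_lcm.2.1
    obtain ⟨e₂, he₂⟩ := hB_lcm.2.1
    have hAd : LeftDvd (pm [s] * m₁) d := by
      obtain ⟨r, hr⟩ := hm₁d
      exact ⟨r, by rw [hd, hr, mul_assoc]⟩
    have hBd : LeftDvd (pm [t] * m₂) d := by
      obtain ⟨r, hr⟩ := hm₂d
      exact ⟨r, by rw [hd', hr, mul_assoc]⟩
    have he₁w : LeftDvd e₁ w := by
      obtain ⟨r, hr⟩ := hAd
      refine ⟨r, cancel_left (a := Y2) ?_⟩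
      rw [← hw, hr, he₁, mul_assoc]
    have he₂w : LeftDvd e₂ w := by
      obtain ⟨r, hr⟩ := hBd
      refine ⟨r, cancel_left (a := Y2) ?_⟩
      rw [← hw, hr, he₂, mul_assoc]
    have hnuw : nu w < nu d := by
      have h2 := nu_superadd Y2 w
      rw [← hw] at h2
      have h3 : 0 < nu Y2 := nu_pos Y2_ne_one
      omega
    obtain ⟨c₀, hc₀, hc₀w⟩ := ih (nu w) (by omega) w e₁ e₂ le_rfl he₁w he₂w
    refine ⟨Y2 * c₀, ⟨?_, ?_, ?_⟩, ?_⟩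
    · obtain ⟨p, hp⟩ := hA_lcm.1
      obtain ⟨q, hq⟩ := hc₀.1
      refine ⟨p * q, ?_⟩
      rw [hq, ← mul_assoc, ← he₁, hp, mul_assoc]
    · obtain ⟨p, hp⟩ := hB_lcm.1
      obtain ⟨q, hq⟩ := hc₀.2.1
      refine ⟨p * q, ?_⟩
      rw [hq, ← mul_assoc, ← he₂, hp, mul_assoc]
    · intro e hea heb
      have hXYe : LeftDvd X e ∧ LeftDvd Y e := by
        refine letters_dvd hst ?_ ?_
        · obtain ⟨p, hp⟩ := hea
          exact ⟨a' * p, by rw [hp, mul_assoc]⟩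
        · obtain ⟨p, hp⟩ := heb
          exact ⟨b' * p, by rw [hp, mul_assoc]⟩
      have hy2e : LeftDvd Y2 e := key_M hXYe.1 hXYe.2
      obtain ⟨f, hf⟩ := hA_lcm.2.2 e hea hy2e
      obtain ⟨g', hg⟩ := hB_lcm.2.2 e heb hy2e
      obtain ⟨f', hf'⟩ := hy2e
      have h1 : LeftDvd e₁ f' :=
        ⟨f, cancel_left (a := Y2) (by rw [← hf', hf, he₁, mul_assoc])⟩
      have h2 : LeftDvd e₂ f' :=
        ⟨g', cancel_left (a := Y2) (by rw [← hf', hg, he₂, mul_assoc])⟩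
      obtain ⟨r, hr⟩ := hc₀.2.2 f' h1 h2
      exact ⟨r, by rw [hf', hr, mul_assoc]⟩
    · obtain ⟨r, hr⟩ := hc₀w
      exact ⟨r, by rw [hw, hr, mul_assoc]⟩

lemma right_lcm_exists (a b : M) : ∃ c, IsRightLcm a b c := by
  obtain ⟨d, hda, hdb⟩ := common_mult a b
  obtain ⟨c, hc, _⟩ := lcm_aux (nu d) d a b le_rfl hda hdb
  exact ⟨c, hc⟩


/-! ### left lcm via reversal -/

lemma rightDvd_iff_rev {a b : M} : RightDvd' a b ↔ LeftDvd (rev a) (rev b) := by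
  constructor
  · rintro ⟨c, rfl⟩
    exact ⟨rev c, by rw [rev_mul]⟩
  · rintro ⟨c, hc⟩
    refine ⟨rev c, ?_⟩
    rw [← rev_rev b, hc, rev_mul, rev_rev]

lemma left_lcm_exists (a b : M) : ∃ c, IsLeftLcm a b c := by
  obtain ⟨c, h1, h2, h3⟩ := right_lcm_exists (rev a) (rev b)
  refine ⟨rev c, ?_, ?_, ?_⟩
  · rw [rightDvd_iff_rev, rev_rev]
    exact h1
  · rw [rightDvd_iff_rev, rev_rev]
    exact h2
  · intro e he1 he2
    rw [rightDvd_iff_rev] at he1 he2 ⊢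
    rw [rev_rev]
    exact h3 (rev e) he1 he2

/-! ### conical -/

lemma conical (a : M) (h : IsUnit a) : a = 1 := by
  obtain ⟨u, rfl⟩ := h
  exact eq_one_of_leftDvd_one ⟨(u⁻¹ : Mˣ), (u.mul_inv).symm⟩

/-! ### the Garside element -/

lemma garside_sets : {d : M | LeftDvd d Dm} = {d | RightDvd' d Dm} := by
  ext d
  simp only [Set.mem_setOf_eq]
  constructor
  · rintro ⟨c, hc⟩
    refine ⟨c, ?_⟩
    have h1 : d * Dm = d * (c * d) := by
      calc d * Dm = Dm * d := (delta_comm d).symm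
        _ = (d * c) * d := by rw [← hc]
        _ = d * (c * d) := mul_assoc _ _ _
    exact cancel_left h1
  · rintro ⟨c, hc⟩
    refine ⟨c, ?_⟩
    have h1 : c * Dm = c * (d * c) := by
      calc c * Dm = Dm * c := (delta_comm c).symm
        _ = (c * d) * c := by rw [← hc]
        _ = c * (d * c) := mul_assoc _ _ _
    exact cancel_left h1

lemma nfq_Dm : nfq Dm = [true, true, true] := by
  show nf [true, true, true] = [true, true, true]
  exact nf_of_isN ⟨by decide, by decide⟩

lemma nu_Dm : nu Dm = 15 := by
  unfold nu
  rw [nfq_Dm]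
  rfl

lemma divisor_short {d : M} (h : LeftDvd d Dm) : (nfq d).length ≤ 15 := by
  obtain ⟨c, hc⟩ := h
  have h1 : nu d + nu c ≤ nu Dm := by rw [hc]; exact nu_superadd d c
  have h2 : ((nfq d).length : ℤ) ≤ F (nfq d) := F_length _
  have h3 : 0 ≤ F (nfq d) := F_nonneg _
  rw [nu_Dm] at h1
  unfold nu at h1
  omega

lemma garside_finite : {d : M | LeftDvd d Dm}.Finite := by
  have hsub : {d : M | LeftDvd d Dm} ⊆ nfq ⁻¹' {w : W | w.length ≤ 15} :=
    fun d hd => divisor_short hd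
  refine Set.Finite.subset (Set.Finite.preimage ?_ ?_) hsub
  · exact nfq_injective.injOn
  · exact List.finite_length_le Bool 15

lemma garside_closure : Submonoid.closure {d : M | LeftDvd d Dm} = ⊤ := by
  rw [Submonoid.eq_top_iff']
  intro m
  refine PresentedMonoid.inductionOn m ?_
  intro w
  show pm w.toList ∈ _
  induction w.toList with
  | nil =>
    rw [pm_nil]
    exact Submonoid.one_mem _
  | cons a t ih =>
    rw [pm_cons]
    refine Submonoid.mul_mem _ (Submonoid.subset_closure ?_) ih
    obtain ⟨ca, hca⟩ := letter_dvd_delta a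
    exact ⟨ca, hca.symm⟩

lemma isGarside : IsGarsideMonoid M where
  mul_left_cancel := fun _ _ _ h => cancel_left h
  mul_right_cancel := fun _ _ _ h => cancel_right h
  conical := conical
  atomic := ⟨nu, fun _ ha => nu_pos ha, nu_superadd⟩
  right_lcm := right_lcm_exists
  left_lcm := left_lcm_exists
  garside := ⟨Dm, garside_sets, garside_finite, garside_closure⟩

lemma rel_in_M : X * Y * X * Y * X = Y * Y := by
  show pm [false] * pm [true] * pm [false] * pm [true] * pm [false] = pm [true] * pm [true]
  rw [← pm_append, ← pm_append, ← pm_append, ← pm_append, ← pm_append]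
  exact pm_step (Step.r1' [] [] (by simp [r1l]) (by simp [r1r]))

end Kappa

theorem kappaMonoid_isGarside_and_no_additive_norm :
    IsGarsideMonoid (PresentedMonoid relKappa) ∧
      ¬∃ ν : PresentedMonoid relKappa → ℕ,
        (∀ a : PresentedMonoid relKappa, a ≠ 1 → 0 < ν a) ∧
        ∀ a b : PresentedMonoid relKappa, ν (a * b) = ν a + ν b := by
  constructor
  · exact Kappa.isGarside
  · rintro ⟨ν, hpos, hadd⟩
    have h0 : ν (Kappa.X * Kappa.Y * Kappa.X * Kappa.Y * Kappa.X) = ν (Kappa.Y * Kappa.Y) := by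
      rw [Kappa.rel_in_M]
    rw [hadd, hadd, hadd, hadd, hadd] at h0
    have hX : 0 < ν Kappa.X := hpos _ (Kappa.pm_letter_ne_one false)
    omega
end
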